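/- arXiv:1812.09965 — 3 statements merged into one kernel-verified Lean document; each statement's English description precedes it below -/
import Mathlib

section
/- Let E be a real Banach space, U ⊆ E open, X : U → E a C¹ Lipschitz vector field, and 𝔽 : (−α, α) × U₀ → U a local flow of X (i.e., 𝔽(0,x) = x and ∂ₜ𝔽(t,x) = X(𝔽(t,x))). Then for each x ∈ U₀ and t ∈ (−α, α), the partial Fréchet derivative D_x𝔽(t,x) ∈ L(E,E) exists, and the curve A(t) := D_x𝔽(t,x) is the unique solution of the linear variational equation A'(t) = DX(𝔽(t,x)) ∘ A(t) with initial condition A(0) = id_E, where DX(y) ∈ L(E,E) denotes the Fréchet derivative of X at y and the derivative A'(t) is taken in the Banach space L(E,E) of continuous linear endomorphisms with the operator norm. -/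
set_option maxHeartbeats 1000000
set_option synthInstance.maxHeartbeats 400000

open Set intervalIntegral Topology Filter Metric MeasureTheory Function Real

section Auxiliary


lemma linODE {E : Type*} [NormedAddCommGroup E] [NormedSpace ℝ E] [CompleteSpace E]
    {G : ℝ → E →L[ℝ] E} (hG : Continuous G) {β : ℝ}
    (hGb : ∀ t, ‖G t‖ ≤ β) {a : ℝ} (ha : 0 < a) :
    ∃ W : ℝ → E →L[ℝ] E, W 0 = 1 ∧ Continuous W ∧
      ∀ t ∈ Icc 0 a, HasDerivAt W ((G t).comp (W t)) t := by
  have hβ0 : 0 ≤ β := (norm_nonneg (G 0)).trans (hGb 0)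
  set I : Set ℝ := Icc 0 a with hI
  haveI : CompactSpace I := isCompact_iff_compactSpace.mp isCompact_Icc
  haveI : Nonempty I := ⟨⟨0, le_refl _, ha.le⟩⟩
  -- the integrand
  set φ : C(I, E →L[ℝ] E) → ℝ → (E →L[ℝ] E) := fun f s => (G s).comp (f (projIcc 0 a ha.le s)) with hφ
  have hφc : ∀ f, Continuous (φ f) := by
    intro f
    have h1 : Continuous fun s : ℝ => f (projIcc 0 a ha.le s) :=
      f.continuous.comp continuous_projIcc
    exact hG.clm_comp h1
  have hφi : ∀ f (c d : ℝ), IntervalIntegrable (φ f) volume c d := fun f c d =>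
    (hφc f).intervalIntegrable c d
  -- the Picard operator
  set T : C(I, E →L[ℝ] E) → C(I, E →L[ℝ] E) := fun f =>
    ⟨fun t => 1 + ∫ s in (0:ℝ)..(t:ℝ), φ f s,
      continuous_const.add ((intervalIntegral.continuous_primitive (hφi f) 0).comp
        continuous_subtype_val)⟩ with hT
  have key : ∀ (n : ℕ) (f g : C(I, E →L[ℝ] E)) (t : I),
      dist ((T^[n] f) t) ((T^[n] g) t) ≤ β ^ n * (t : ℝ) ^ n / n.factorial * dist f g := by
    intro n
    induction n with
    | zero => intro f g t; simpa using ContinuousMap.dist_apply_le_dist t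
    | succ n ih =>
      intro f g t
      rw [iterate_succ_apply', iterate_succ_apply']
      set u := T^[n] f
      set v := T^[n] g
      have htI : (t : ℝ) ∈ I := t.2
      have ht0 : (0:ℝ) ≤ t := htI.1
      have hta : (t:ℝ) ≤ a := htI.2
      have hD : (0:ℝ) ≤ dist f g := dist_nonneg
      set C : ℝ := β ^ (n+1) / n.factorial * dist f g with hC
      have hC0 : 0 ≤ C := by positivity
      have hpt : ∀ s ∈ Set.uIoc (0:ℝ) (t:ℝ), ‖φ u s - φ v s‖ ≤ C * s ^ n := by
        intro s hs
        rw [uIoc_of_le ht0] at hs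
        have hsI : s ∈ I := ⟨hs.1.le, hs.2.trans hta⟩
        have hproj : projIcc 0 a ha.le s = ⟨s, hsI⟩ := projIcc_of_mem ha.le hsI
        have : φ u s - φ v s = (G s).comp (u ⟨s, hsI⟩ - v ⟨s, hsI⟩) := by
          rw [hφ]; simp only [hproj, ContinuousLinearMap.comp_sub]
        rw [this]
        calc ‖(G s).comp (u ⟨s, hsI⟩ - v ⟨s, hsI⟩)‖
            ≤ ‖G s‖ * ‖u ⟨s, hsI⟩ - v ⟨s, hsI⟩‖ := ContinuousLinearMap.opNorm_comp_le _ _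
          _ ≤ β * (β ^ n * s ^ n / n.factorial * dist f g) := by
              apply mul_le_mul (hGb s) ?_ (norm_nonneg _) hβ0
              rw [← dist_eq_norm]; exact ih f g ⟨s, hsI⟩
          _ = C * s ^ n := by rw [hC]; ring
      have h1 : dist ((T u) t) ((T v) t) = ‖∫ s in (0:ℝ)..(t:ℝ), (φ u s - φ v s)‖ := by
        rw [dist_eq_norm]
        show ‖(1 + ∫ s in (0:ℝ)..(t:ℝ), φ u s) - (1 + ∫ s in (0:ℝ)..(t:ℝ), φ v s)‖ = _
        rw [intervalIntegral.integral_sub (hφi u 0 t) (hφi v 0 t)]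
        congr 1; abel
      rw [h1]
      have h2 : ‖∫ s in (0:ℝ)..(t:ℝ), (φ u s - φ v s)‖ ≤
          |∫ s in (0:ℝ)..(t:ℝ), C * s ^ n| := by
        apply intervalIntegral.norm_integral_le_abs_of_norm_le
        · rw [ae_restrict_iff' measurableSet_uIoc]
          exact Eventually.of_forall hpt
        · exact (Continuous.intervalIntegrable (by continuity) 0 t)
      refine h2.trans ?_
      rw [intervalIntegral.integral_const_mul, integral_pow, zero_pow (Nat.succ_ne_zero n),
        sub_zero]
      have : C * ((t:ℝ) ^ (n + 1) / (n + 1)) =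
          β ^ (n+1) * (t:ℝ) ^ (n+1) / (n+1).factorial * dist f g := by
        rw [hC, Nat.factorial_succ]
        have h1 : ((n:ℝ) + 1) ≠ 0 := by positivity
        have h2 : ((n.factorial : ℝ)) ≠ 0 := Nat.cast_ne_zero.mpr n.factorial_ne_zero
        push_cast
        field_simp
      rw [abs_of_nonneg (by positivity)]
      exact le_of_eq this
  -- a contracting iterate
  obtain ⟨N, hN⟩ := ((FloorSemiring.tendsto_pow_div_factorial_atTop (β * a)).eventually
    (gt_mem_nhds zero_lt_one)).exists
  have hNnn : (0:ℝ) ≤ (β * a) ^ N / N.factorial := by positivity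
  have hlipN : LipschitzWith ⟨(β * a) ^ N / N.factorial, hNnn⟩ (T^[N]) := by
    apply LipschitzWith.of_dist_le_mul
    intro f g
    rw [ContinuousMap.dist_le (by positivity)]
    intro t
    refine (key N f g t).trans ?_
    have h1 : (t:ℝ) ^ N ≤ a ^ N := pow_le_pow_left₀ t.2.1 t.2.2 N
    calc β ^ N * (t:ℝ) ^ N / N.factorial * dist f g
        ≤ β ^ N * a ^ N / N.factorial * dist f g := by
          gcongr
      _ = (β * a) ^ N / N.factorial * dist f g := by rw [mul_pow]
  have hcontr : ContractingWith ⟨(β * a) ^ N / N.factorial, hNnn⟩ (T^[N]) := ⟨hN, hlipN⟩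
  have hfix : T (ContractingWith.fixedPoint (T^[N]) hcontr) =
      ContractingWith.fixedPoint (T^[N]) hcontr := hcontr.isFixedPt_fixedPoint_iterate
  set W₀ := ContractingWith.fixedPoint (T^[N]) hcontr with hW₀
  -- the solution, extended to all of ℝ
  set W : ℝ → E →L[ℝ] E := fun t => 1 + ∫ s in (0:ℝ)..t, φ W₀ s with hW
  have hWI : ∀ t (ht : t ∈ I), W t = W₀ ⟨t, ht⟩ := by
    intro t ht
    conv_rhs => rw [← hfix]
    rfl
  have hWcont : Continuous W :=
    continuous_const.add (intervalIntegral.continuous_primitive (hφi W₀) 0)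
  refine ⟨W, ?_, hWcont, ?_⟩
  · rw [hW]; simp
  · intro t ht
    have hder : HasDerivAt W (φ W₀ t) t := by
      apply HasDerivAt.const_add
      exact intervalIntegral.integral_hasDerivAt_right (hφi W₀ 0 t)
        ((hφc W₀).stronglyMeasurableAtFilter _ _) (hφc W₀).continuousAt
    have : φ W₀ t = (G t).comp (W t) := by
      simp only [hφ, projIcc_of_mem ha.le ht, hWI t ht]
    rwa [this] at hder


lemma gb_eq (K ε xx : ℝ) : gronwallBound 0 K ε xx = ε * gronwallBound 0 K 1 xx := by
  rcases eq_or_ne K 0 with h | h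
  · subst h; rw [gronwallBound_K0, gronwallBound_K0]; ring
  · rw [gronwallBound_of_K_ne_0 h, gronwallBound_of_K_ne_0 h]; ring

lemma gb_nonneg {K xx : ℝ} (hK : 0 ≤ K) (hx : 0 ≤ xx) : 0 ≤ gronwallBound 0 K 1 xx := by
  rcases eq_or_ne K 0 with h | h
  · subst h; rw [gronwallBound_K0]; simpa using hx
  · rw [gronwallBound_of_K_ne_0 h]
    have hK' : 0 < K := lt_of_le_of_ne hK (Ne.symm h)
    have h2 : (1:ℝ) ≤ Real.exp (K * xx) := by
      rw [← Real.exp_zero]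
      exact Real.exp_le_exp.mpr (by positivity)
    have h1 : 0 ≤ (Real.exp (K * xx) - 1) := by linarith
    have h3 : 0 ≤ 1 / K * (Real.exp (K * xx) - 1) := by positivity
    linarith

lemma core {E : Type*} [NormedAddCommGroup E] [NormedSpace ℝ E] [CompleteSpace E]
    {U : Set E} (hU : IsOpen U) (X : E → E) (β : NNReal) (hLip : LipschitzOnWith β X U)
    (DX : E → E →L[ℝ] E) (hDX : ∀ y ∈ U, HasFDerivAt X (DX y) y)
    (hDXcont : ContinuousOn DX U)
    (α : ℝ) (hα : 0 < α) (U₀ : Set E) (hU₀ : IsOpen U₀) (hU₀U : U₀ ⊆ U)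
    (𝔽 : ℝ → E → E)
    (hmem : ∀ t ∈ Set.Ioo (-α) α, ∀ x ∈ U₀, 𝔽 t x ∈ U)
    (h0 : ∀ x ∈ U₀, 𝔽 0 x = x)
    (hflow : ∀ x ∈ U₀, ∀ t ∈ Set.Ioo (-α) α, HasDerivAt (fun s => 𝔽 s x) (X (𝔽 t x)) t)
    (x : E) (hx : x ∈ U₀)
    (linODE : ∀ {G : ℝ → E →L[ℝ] E}, Continuous G → (∀ t, ‖G t‖ ≤ β) → ∀ {a : ℝ}, 0 < a →
      ∃ W : ℝ → E →L[ℝ] E, W 0 = 1 ∧ Continuous W ∧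
        ∀ t ∈ Icc 0 a, HasDerivAt W ((G t).comp (W t)) t) :
    ∃ W : ℝ → E →L[ℝ] E, W 0 = 1 ∧ ∀ t ∈ Ico 0 α,
      HasDerivAt W ((DX (𝔽 t x)).comp (W t)) t ∧ HasFDerivAt (fun y => 𝔽 t y) (W t) x := by
  have hβ : ∀ y ∈ U, ‖DX y‖ ≤ β := fun y hy =>
    (hDX y hy).le_of_lipschitzOn (hU.mem_nhds hy) hLip
  have hIccIoo : ∀ b ∈ Ioo 0 α, Icc (0:ℝ) b ⊆ Ioo (-α) α := fun b hb s hs =>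
    ⟨lt_of_lt_of_le (neg_neg_iff_pos.mpr hα) hs.1, lt_of_le_of_lt hs.2 hb.2⟩
  -- continuity of the flow of x in time
  have hflowcont : ∀ y ∈ U₀, ContinuousOn (fun s => 𝔽 s y) (Ioo (-α) α) := fun y hy s hs =>
    (hflow y hy s hs).continuousAt.continuousWithinAt
  -- existence of the solution together with the derivative property, for each b < α
  have exW : ∀ b ∈ Ioo 0 α, ∃ W : ℝ → E →L[ℝ] E, W 0 = 1 ∧ Continuous W ∧
      (∀ s ∈ Icc 0 b, HasDerivAt W ((DX (𝔽 s x)).comp (W s)) s) ∧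
      (∀ s ∈ Icc 0 b, HasFDerivAt (fun y => 𝔽 s y) (W s) x) := by
    intro b hb
    have hb0 : (0:ℝ) ≤ b := hb.1.le
    -- truncated coefficient
    set G : ℝ → E →L[ℝ] E := fun s => DX (𝔽 (projIcc 0 b hb0 s) x) with hG
    have hprojmem : ∀ s : ℝ, 𝔽 ((projIcc 0 b hb0 s : ℝ)) x ∈ U := fun s =>
      hmem _ (hIccIoo b hb (projIcc 0 b hb0 s).2) x hx
    have hGcont : Continuous G := by
      apply ContinuousOn.comp_continuous (hDXcont)
      · apply ContinuousOn.comp_continuous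
          ((hflowcont x hx).mono (hIccIoo b hb))
          (continuous_subtype_val.comp continuous_projIcc)
        intro s; exact (projIcc 0 b hb0 s).2
      · exact hprojmem
    have hGb : ∀ s, ‖G s‖ ≤ β := fun s => hβ _ (hprojmem s)
    obtain ⟨W, hW0, hWcont, hWder⟩ := linODE hGcont hGb hb.1
    have hWder' : ∀ s ∈ Icc 0 b, HasDerivAt W ((DX (𝔽 s x)).comp (W s)) s := by
      intro s hs
      have := hWder s hs
      simp only [hG, projIcc_of_mem hb0 hs] at this
      exact this
    refine ⟨W, hW0, hWcont, hWder', ?_⟩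
    -- the analytic heart: W s is the Fréchet derivative of 𝔽 s at x
    -- trajectory compact set
    set Γ : Set E := (fun s => 𝔽 s x) '' Icc 0 b with hΓ
    have hΓc : IsCompact Γ :=
      (isCompact_Icc).image_of_continuousOn ((hflowcont x hx).mono (hIccIoo b hb))
    have hΓU : Γ ⊆ U := by
      rintro - ⟨s, hs, rfl⟩; exact hmem s (hIccIoo b hb hs) x hx
    have hΓne : Γ.Nonempty := ⟨𝔽 0 x, ⟨0, ⟨le_rfl, hb0⟩, rfl⟩⟩
    -- uniform differentiability of X along Γ
    have UD : ∀ ε > (0:ℝ), ∃ ρ > (0:ℝ), ∀ z ∈ Γ, ∀ w, ‖w - z‖ ≤ ρ →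
        ‖X w - X z - DX z (w - z)‖ ≤ ε * ‖w - z‖ := by
      intro ε hε
      have key : ∀ z ∈ Γ, ∃ r > (0:ℝ), ball z (3*r) ⊆ U ∧
          ∀ w ∈ ball z (3*r), ‖DX w - DX z‖ ≤ ε/2 := by
        intro z hz
        have hzU : z ∈ U := hΓU hz
        have hcontz : ContinuousAt DX z := hDXcont.continuousAt (hU.mem_nhds hzU)
        obtain ⟨δ₁, hδ₁, hδ₁'⟩ := Metric.continuousAt_iff.mp hcontz (ε/2) (by positivity)
        obtain ⟨δ₂, hδ₂, hδ₂'⟩ := Metric.isOpen_iff.mp hU z hzU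
        refine ⟨min δ₁ δ₂ / 3, by positivity, ?_, ?_⟩
        · intro w hw
          apply hδ₂'
          rw [mem_ball] at hw ⊢
          calc dist w z < 3 * (min δ₁ δ₂ / 3) := hw
            _ = min δ₁ δ₂ := by ring
            _ ≤ δ₂ := min_le_right _ _
        · intro w hw
          rw [mem_ball] at hw
          have : dist w z < δ₁ := by
            calc dist w z < 3 * (min δ₁ δ₂ / 3) := hw
              _ = min δ₁ δ₂ := by ring
              _ ≤ δ₁ := min_le_left _ _
          have := hδ₁' this
          rw [dist_eq_norm] at this
          exact this.le
      choose! r hr0 hrU hrDX using key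
      have hcover : Γ ⊆ ⋃ z ∈ Γ, ball z (r z) := fun z hz =>
        mem_biUnion hz (mem_ball_self (hr0 z hz))
      obtain ⟨S, hSΓ, hSfin, hScov⟩ := hΓc.elim_finite_subcover_image
        (fun z _ => isOpen_ball) hcover
      have hSne : S.Nonempty := by
        obtain ⟨z, hz⟩ := hΓne
        obtain ⟨i, hi, -⟩ := mem_iUnion₂.mp (hScov hz)
        exact ⟨i, hi⟩
      haveI := hSfin.fintype
      set ρ : ℝ := hSfin.toFinset.inf' (by simpa using hSne) r with hρdef
      have hρ0 : 0 < ρ := by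
        rw [hρdef, Finset.lt_inf'_iff]
        intro i hi
        exact hr0 i (hSΓ (hSfin.mem_toFinset.mp hi))
      refine ⟨ρ, hρ0, ?_⟩
      intro z hz w hw
      obtain ⟨i, hiS, hzi⟩ := mem_iUnion₂.mp (hScov hz)
      have hiΓ : i ∈ Γ := hSΓ hiS
      have hρr : ρ ≤ r i := Finset.inf'_le _ (hSfin.mem_toFinset.mpr hiS)
      have hzball : z ∈ ball i (3 * r i) := by
        rw [mem_ball] at hzi ⊢
        have := hr0 i hiΓ
        linarith
      have hwball : w ∈ ball i (3 * r i) := by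
        rw [mem_ball] at hzi ⊢
        have h1 : dist w z ≤ ρ := by rwa [dist_eq_norm]
        have := hr0 i hiΓ
        calc dist w i ≤ dist w z + dist z i := dist_triangle _ _ _
          _ < ρ + r i := by linarith
          _ ≤ 3 * r i := by linarith
      have hDbound : ∀ ξ ∈ ball i (3 * r i), ‖DX ξ - DX z‖ ≤ ε := by
        intro ξ hξ
        have tri : ‖DX ξ - DX z‖ ≤ ‖DX ξ - DX i‖ + ‖DX i - DX z‖ := by
          have := dist_triangle (DX ξ) (DX i) (DX z)
          simpa [dist_eq_norm] using this
        have h2 : ‖DX i - DX z‖ ≤ ε/2 := by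
          rw [norm_sub_rev]; exact hrDX i hiΓ z hzball
        have h1 := hrDX i hiΓ ξ hξ
        linarith
      -- mean value inequality on the ball
      have hball_sub : ball i (3 * r i) ⊆ U := hrU i hiΓ
      have hmv := (convex_ball i (3 * r i)).norm_image_sub_le_of_norm_hasFDerivWithin_le
        (f := fun w => X w - DX z w) (f' := fun ξ => DX ξ - DX z) (C := ε)
        (fun ξ hξ => (((hDX ξ (hball_sub hξ)).sub ((DX z).hasFDerivAt))).hasFDerivWithinAt)
        (fun ξ hξ => hDbound ξ hξ) hzball hwball
      have heq : X w - DX z w - (X z - DX z z) = X w - X z - DX z (w - z) := by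
        rw [map_sub]; abel
      simpa only [heq] using hmv
    have LD : ∀ y ∈ U₀, ∀ s ∈ Icc 0 b, ‖𝔽 s y - 𝔽 s x‖ ≤ Real.exp (β * b) * ‖y - x‖ := by
      intro y hy s hs
      have h := dist_le_of_trajectories_ODE_of_mem (v := fun _ z => X z)
        (s := fun _ => U) (K := β) (fun _ _ => hLip) (a := 0) (b := b) (δ := ‖y - x‖)
        (f := fun τ => 𝔽 τ y) (g := fun τ => 𝔽 τ x)
        (fun τ hτ => ((hflow y hy τ (hIccIoo b hb hτ)).continuousAt).continuousWithinAt)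
        (fun τ hτ => (hflow y hy τ (hIccIoo b hb (Ico_subset_Icc_self hτ))).hasDerivWithinAt)
        (fun τ hτ => hmem τ (hIccIoo b hb (Ico_subset_Icc_self hτ)) y hy)
        (fun τ hτ => ((hflow x hx τ (hIccIoo b hb hτ)).continuousAt).continuousWithinAt)
        (fun τ hτ => (hflow x hx τ (hIccIoo b hb (Ico_subset_Icc_self hτ))).hasDerivWithinAt)
        (fun τ hτ => hmem τ (hIccIoo b hb (Ico_subset_Icc_self hτ)) x hx)
        (by simp only [h0 y hy, h0 x hx]; rw [dist_eq_norm]) s hs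
      rw [dist_eq_norm] at h
      refine h.trans ?_
      have hβ0 : (0:ℝ) ≤ β := β.2
      have hexp : Real.exp (↑β * (s - 0)) ≤ Real.exp (↑β * b) :=
        Real.exp_le_exp.mpr (by nlinarith [hs.1, hs.2])
      calc ‖y - x‖ * Real.exp (↑β * (s - 0)) ≤ ‖y - x‖ * Real.exp (↑β * b) :=
            mul_le_mul_of_nonneg_left hexp (norm_nonneg _)
        _ = Real.exp (↑β * b) * ‖y - x‖ := mul_comm _ _
    intro t ht
    rw [hasFDerivAt_iff_isLittleO_nhds_zero, Asymptotics.isLittleO_iff]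
    intro c hc
    set C₀ : ℝ := Real.exp (β * b) with hC₀def
    have hC₀ : 0 < C₀ := Real.exp_pos _
    set gB : ℝ := gronwallBound 0 β 1 t with hgBdef
    have hgB0 : 0 ≤ gB := gb_nonneg β.2 ht.1
    set ε : ℝ := c / (C₀ * gB + 1) with hεdef
    have hε : 0 < ε := by positivity
    obtain ⟨ρ, hρ0, hUD2⟩ := UD ε hε
    obtain ⟨η₀, hη₀, hη₀'⟩ := Metric.isOpen_iff.mp hU₀ x hx
    set η : ℝ := min η₀ (ρ / C₀) with hηdef
    have hη : 0 < η := lt_min hη₀ (by positivity)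
    filter_upwards [ball_mem_nhds (0:E) hη] with h hh
    rw [mem_ball, dist_zero_right] at hh
    set y : E := x + h with hydef
    have hyx : y - x = h := by rw [hydef]; abel
    have hyU₀ : y ∈ U₀ := by
      apply hη₀'
      rw [mem_ball, dist_eq_norm, hydef, add_sub_cancel_left]
      exact lt_of_lt_of_le hh (min_le_left _ _)
    have hhρ : C₀ * ‖h‖ ≤ ρ := by
      have h1 : ‖h‖ ≤ ρ / C₀ := le_of_lt (lt_of_lt_of_le hh (min_le_right _ _))
      calc C₀ * ‖h‖ ≤ C₀ * (ρ / C₀) := by gcongr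
        _ = ρ := by field_simp
    set θ : ℝ → E := fun s => 𝔽 s y - 𝔽 s x - (W s) h with hθdef
    have hmemIoo : ∀ s ∈ Icc 0 t, s ∈ Ioo (-α) α := fun s hs =>
      hIccIoo b hb ⟨hs.1, hs.2.trans ht.2⟩
    have hIccsub : Icc 0 t ⊆ Icc 0 b := Icc_subset_Icc le_rfl ht.2
    have hθcont : ContinuousOn θ (Icc 0 t) := by
      apply ContinuousOn.sub
      apply ContinuousOn.sub
      · exact fun s hs => ((hflow y hyU₀ s (hmemIoo s hs)).continuousAt).continuousWithinAt
      · exact fun s hs => ((hflow x hx s (hmemIoo s hs)).continuousAt).continuousWithinAt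
      · exact ((hWcont.clm_apply continuous_const).continuousOn)
    set θ' : ℝ → E := fun s => X (𝔽 s y) - X (𝔽 s x) - ((DX (𝔽 s x)).comp (W s)) h with hθ'def
    have hθder : ∀ s ∈ Ico 0 t, HasDerivWithinAt θ (θ' s) (Ici s) s := by
      intro s hs
      have h1 := hflow y hyU₀ s (hmemIoo s ⟨hs.1, hs.2.le⟩)
      have h2 := hflow x hx s (hmemIoo s ⟨hs.1, hs.2.le⟩)
      have h3 := (hWder' s (hIccsub ⟨hs.1, hs.2.le⟩)).clm_apply (hasDerivAt_const s h)
      simp only [map_zero, add_zero] at h3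
      exact (((h1.sub h2).sub h3).hasDerivWithinAt)
    have hbound : ∀ s ∈ Ico 0 t, ‖θ' s‖ ≤ β * ‖θ s‖ + ε * (C₀ * ‖h‖) := by
      intro s hs
      have hsb : s ∈ Icc 0 b := hIccsub ⟨hs.1, hs.2.le⟩
      have hzΓ : 𝔽 s x ∈ Γ := ⟨s, hsb, rfl⟩
      have hld : ‖𝔽 s y - 𝔽 s x‖ ≤ C₀ * ‖h‖ := by
        have := LD y hyU₀ s hsb
        rwa [hyx] at this
      have hwz : ‖𝔽 s y - 𝔽 s x‖ ≤ ρ := hld.trans hhρ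
      have hr := hUD2 (𝔽 s x) hzΓ (𝔽 s y) hwz
      have hdecomp : θ' s = DX (𝔽 s x) (θ s)
          + (X (𝔽 s y) - X (𝔽 s x) - DX (𝔽 s x) (𝔽 s y - 𝔽 s x)) := by
        simp only [hθdef, hθ'def, map_sub, ContinuousLinearMap.coe_comp', Function.comp_apply]
        abel
      rw [hdecomp]
      have hn1 : ‖DX (𝔽 s x) (θ s)‖ ≤ β * ‖θ s‖ := by
        refine ((DX (𝔽 s x)).le_opNorm _).trans ?_
        gcongr
        exact hβ _ (hmem s (hIccIoo b hb hsb) x hx)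
      have hn2 : ‖X (𝔽 s y) - X (𝔽 s x) - DX (𝔽 s x) (𝔽 s y - 𝔽 s x)‖ ≤ ε * (C₀ * ‖h‖) := by
        refine hr.trans ?_
        gcongr
      calc ‖DX (𝔽 s x) (θ s) + (X (𝔽 s y) - X (𝔽 s x) - DX (𝔽 s x) (𝔽 s y - 𝔽 s x))‖
          ≤ ‖DX (𝔽 s x) (θ s)‖ + ‖X (𝔽 s y) - X (𝔽 s x) - DX (𝔽 s x) (𝔽 s y - 𝔽 s x)‖ :=
            norm_add_le _ _
        _ ≤ β * ‖θ s‖ + ε * (C₀ * ‖h‖) := add_le_add hn1 hn2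
    have hθ0 : ‖θ 0‖ ≤ 0 := by
      have : θ 0 = 0 := by
        rw [hθdef]
        simp only [h0 y hyU₀, h0 x hx, hW0, hydef, ContinuousLinearMap.one_apply, h0 (x + h) hyU₀]
        abel
      rw [this, norm_zero]
    have hgron := norm_le_gronwallBound_of_norm_deriv_right_le hθcont hθder hθ0 hbound
      t ⟨ht.1, le_rfl⟩
    rw [sub_zero, gb_eq] at hgron
    have hfinal : ε * (C₀ * ‖h‖) * gB ≤ c * ‖h‖ := by
      have hd1 : (C₀ * gB) / (C₀ * gB + 1) ≤ 1 :=
        div_le_one_of_le₀ (by linarith [mul_nonneg hC₀.le hgB0]) (by positivity)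
      calc ε * (C₀ * ‖h‖) * gB = (C₀ * gB) / (C₀ * gB + 1) * (c * ‖h‖) := by
            rw [hεdef]; ring
        _ ≤ 1 * (c * ‖h‖) := by
            apply mul_le_mul_of_nonneg_right hd1 (by positivity)
        _ = c * ‖h‖ := one_mul _
    calc ‖𝔽 t (x + h) - 𝔽 t x - (W t) h‖ = ‖θ t‖ := by rw [hθdef]
      _ ≤ ε * (C₀ * ‖h‖) * gB := by
          have := hgron
          calc ‖θ t‖ ≤ ε * (C₀ * ‖h‖) * gronwallBound 0 (↑β) 1 t := by
                simpa [mul_assoc] using this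
            _ = ε * (C₀ * ‖h‖) * gB := by rw [hgBdef]
      _ ≤ c * ‖h‖ := hfinal
  choose Wb hWb0 hWbc hWbd hWbf using exW
  -- agreement of the local solutions by uniqueness
  have hagree : ∀ b (hb : b ∈ Ioo 0 α) b' (hb' : b' ∈ Ioo 0 α) s,
      0 ≤ s → s ≤ b → s ≤ b' → Wb b hb s = Wb b' hb' s := by
    intro b hb b' hb' s hs0 hsb hsb'
    set m : ℝ := min b b' with hm
    have hm0 : 0 < m := lt_min hb.1 hb'.1
    have hmα : m < α := lt_of_le_of_lt (min_le_left _ _) hb.2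
    set v : ℝ → (E →L[ℝ] E) → (E →L[ℝ] E) :=
      fun τ A => (DX (𝔽 ((projIcc 0 m hm0.le τ : ℝ)) x)).comp A with hv
    have hprojU : ∀ τ : ℝ, 𝔽 ((projIcc 0 m hm0.le τ : ℝ)) x ∈ U := fun τ =>
      hmem _ (hIccIoo m ⟨hm0, hmα⟩ (projIcc 0 m hm0.le τ).2) x hx
    have hlipv : ∀ τ, LipschitzOnWith β (v τ) (univ : Set (E →L[ℝ] E)) := by
      intro τ
      apply LipschitzWith.lipschitzOnWith
      apply LipschitzWith.of_dist_le_mul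
      intro A A'
      rw [dist_eq_norm, dist_eq_norm, hv]
      simp only [← ContinuousLinearMap.comp_sub]
      exact le_trans (ContinuousLinearMap.opNorm_comp_le _ _)
        (mul_le_mul_of_nonneg_right (hβ _ (hprojU τ)) (norm_nonneg _))
    have hder : ∀ (bb) (hbb : bb ∈ Ioo 0 α), m ≤ bb → ∀ τ ∈ Ico (0:ℝ) m,
        HasDerivWithinAt (Wb bb hbb) (v τ (Wb bb hbb τ)) (Ici τ) τ := by
      intro bb hbb hmbb τ hτ
      have hτm : τ ∈ Icc 0 m := ⟨hτ.1, hτ.2.le⟩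
      have hd := (hWbd bb hbb τ ⟨hτ.1, hτ.2.le.trans hmbb⟩).hasDerivWithinAt (s := Ici τ)
      have : v τ (Wb bb hbb τ) = (DX (𝔽 τ x)).comp (Wb bb hbb τ) := by
        simp only [hv, projIcc_of_mem hm0.le hτm]
      rw [this]
      exact hd
    have hEq := ODE_solution_unique_of_mem_Icc_right (v := v)
      (s := fun _ => (univ : Set (E →L[ℝ] E))) (fun τ _ => hlipv τ)
      ((hWbc b hb).continuousOn) (hder b hb (min_le_left _ _))
      (fun τ _ => mem_univ _)
      ((hWbc b' hb').continuousOn) (hder b' hb' (min_le_right _ _))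
      (fun τ _ => mem_univ _)
      (by rw [hWb0 b hb, hWb0 b' hb'])
    exact hEq ⟨hs0, le_min hsb hsb'⟩
  -- the glued global solution
  set W : ℝ → E →L[ℝ] E := fun t =>
    if htt : 0 < t ∧ t < α then
      Wb ((t + α)/2) ⟨by linarith [htt.1], by linarith [htt.2]⟩ t
    else 1 + t • ((DX (𝔽 0 x)).comp (1 : E →L[ℝ] E)) with hWdef
  have hWneg : ∀ t ≤ (0:ℝ), W t = 1 + t • ((DX (𝔽 0 x)).comp (1 : E →L[ℝ] E)) := by
    intro t htle
    rw [hWdef]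
    exact dif_neg (by rintro ⟨h1, -⟩; linarith)
  have hW0 : W 0 = 1 := by rw [hWneg 0 le_rfl]; simp
  have hWpos : ∀ t, 0 < t → t < α → ∀ (b) (hb : b ∈ Ioo 0 α), t ≤ b →
      W t = Wb b hb t := by
    intro t h1 h2 b hb htb
    simp only [hWdef]
    rw [dif_pos ⟨h1, h2⟩]
    exact hagree _ _ b hb t h1.le (by linarith) htb
  refine ⟨W, hW0, fun t ht => ?_⟩
  rcases ht.1.eq_or_lt with heq | htpos
  · -- t = 0
    subst heq
    have hc : (α/2 : ℝ) ∈ Ioo 0 α := ⟨by linarith, by linarith⟩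
    have haff : HasDerivAt (fun s : ℝ => 1 + s • ((DX (𝔽 0 x)).comp (1 : E →L[ℝ] E)))
        ((DX (𝔽 0 x)).comp (1 : E →L[ℝ] E)) 0 := by
      simpa using ((hasDerivAt_id (0:ℝ)).smul_const
        ((DX (𝔽 0 x)).comp (1 : E →L[ℝ] E))).const_add 1
    have hleft : HasDerivWithinAt W ((DX (𝔽 0 x)).comp (1 : E →L[ℝ] E)) (Iic 0) 0 :=
      haff.hasDerivWithinAt.congr (fun s hs => hWneg s hs) (hWneg 0 le_rfl)
    have hd0 := hWbd (α/2) hc 0 ⟨le_rfl, hc.1.le⟩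
    rw [hWb0 (α/2) hc] at hd0
    have hmemnhds : Ico (0:ℝ) (α/2) ∈ 𝓝[Ici 0] (0:ℝ) := by
      apply mem_nhdsWithin.mpr
      exact ⟨Iio (α/2), isOpen_Iio, hc.1, fun s hs => ⟨hs.2, hs.1⟩⟩
    have hWeqr : ∀ᶠ s in 𝓝[Ici 0] (0:ℝ), W s = Wb (α/2) hc s := by
      filter_upwards [hmemnhds] with s hs
      rcases hs.1.eq_or_lt with h | h
      · rw [← h, hW0, hWb0]
      · exact hWpos s h (hs.2.trans hc.2) (α/2) hc hs.2.le
    have hright : HasDerivWithinAt W ((DX (𝔽 0 x)).comp (1 : E →L[ℝ] E)) (Ici 0) 0 :=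
      (hd0.hasDerivWithinAt (s := Ici 0)).congr_of_eventuallyEq hWeqr (by rw [hW0, hWb0])
    have hunion := hleft.union hright
    rw [Iic_union_Ici] at hunion
    have hderiv0 : HasDerivAt W ((DX (𝔽 0 x)).comp (1 : E →L[ℝ] E)) 0 := hasDerivWithinAt_univ.mp hunion
    constructor
    · rw [hW0]; exact hderiv0
    · have := hWbf (α/2) hc 0 ⟨le_rfl, hc.1.le⟩
      rw [hWb0] at this
      rw [hW0]
      exact this
  · -- 0 < t
    set c : ℝ := (t + α)/2 with hcdef
    have hc : c ∈ Ioo 0 α := ⟨by rw [hcdef]; linarith [ht.2], by rw [hcdef]; linarith [ht.2]⟩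
    have htc : t < c := by rw [hcdef]; linarith [ht.2]
    have hWt : W t = Wb c hc t := hWpos t htpos ht.2 c hc htc.le
    have hweq : W =ᶠ[𝓝 t] Wb c hc := by
      filter_upwards [Ioo_mem_nhds htpos htc] with s hs
      exact hWpos s hs.1 (hs.2.trans hc.2) c hc hs.2.le
    constructor
    · rw [hWt]
      exact hweq.hasDerivAt_iff.mpr (hWbd c hc t ⟨ht.1, htc.le⟩)
    · rw [hWt]
      exact hWbf c hc t ⟨ht.1, htc.le⟩

end Auxiliary

/-- Let `E` be a real Banach space, `U ⊆ E` open, `X : U → E` a `C¹`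
Lipschitz vector field (with Fréchet derivative `DX`), and `𝔽 : (-α, α) × U₀ → U` a local flow
of `X`.  Then for each `x ∈ U₀` the partial Fréchet derivative `A t = D_x 𝔽(t, x) ∈ L(E,E)`
exists for all `t ∈ (-α, α)`, and `A` is the unique solution of the linear variational equation
`A'(t) = DX(𝔽(t,x)) ∘ A(t)`, `A 0 = id`, in the Banach space `L(E,E)`. -/
theorem flow_variational_equation
    {E : Type*} [NormedAddCommGroup E] [NormedSpace ℝ E] [CompleteSpace E]
    {U : Set E} (hU : IsOpen U) (X : E → E)
    (hX : ContDiffOn ℝ 1 X U) (β : NNReal) (hLip : LipschitzOnWith β X U)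
    (DX : E → E →L[ℝ] E) (hDX : ∀ y ∈ U, HasFDerivAt X (DX y) y)
    (hDXcont : ContinuousOn DX U)
    (α : ℝ) (hα : 0 < α) (U₀ : Set E) (hU₀ : IsOpen U₀) (hU₀U : U₀ ⊆ U)
    (𝔽 : ℝ → E → E)
    (hmem : ∀ t ∈ Set.Ioo (-α) α, ∀ x ∈ U₀, 𝔽 t x ∈ U)
    (h0 : ∀ x ∈ U₀, 𝔽 0 x = x)
    (hflow : ∀ x ∈ U₀, ∀ t ∈ Set.Ioo (-α) α, HasDerivAt (fun s => 𝔽 s x) (X (𝔽 t x)) t) :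
    ∀ x ∈ U₀, ∃ A : ℝ → E →L[ℝ] E,
      (∀ t ∈ Set.Ioo (-α) α, HasFDerivAt (fun y => 𝔽 t y) (A t) x) ∧
      A 0 = ContinuousLinearMap.id ℝ E ∧
      (∀ t ∈ Set.Ioo (-α) α, HasDerivAt A ((DX (𝔽 t x)).comp (A t)) t) ∧
      (∀ B : ℝ → E →L[ℝ] E, B 0 = ContinuousLinearMap.id ℝ E →
        (∀ t ∈ Set.Ioo (-α) α, HasDerivAt B ((DX (𝔽 t x)).comp (B t)) t) →
        ∀ t ∈ Set.Ioo (-α) α, B t = A t) := by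
  intro x hx
  have hβ : ∀ y ∈ U, ‖DX y‖ ≤ β := fun y hy =>
    (hDX y hy).le_of_lipschitzOn (hU.mem_nhds hy) hLip
  -- forward solution
  obtain ⟨Wf, hWf0, hWf⟩ := core hU X β hLip DX hDX hDXcont α hα U₀ hU₀ hU₀U 𝔽
    hmem h0 hflow x hx (fun {G} hG hGb {a} ha => linODE hG hGb ha)
  -- backward (time-reversed) solution
  have hLipneg : LipschitzOnWith β (fun y => -X y) U := fun y hy z hz => by
    simpa [edist_neg_neg] using hLip hy hz
  have hmem' : ∀ t ∈ Set.Ioo (-α) α, ∀ y ∈ U₀, 𝔽 (-t) y ∈ U := fun t ht y hy =>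
    hmem (-t) ⟨by linarith [ht.2], by linarith [ht.1]⟩ y hy
  have h0' : ∀ y ∈ U₀, 𝔽 (-0) y = y := by
    intro y hy; rw [neg_zero]; exact h0 y hy
  have hflow' : ∀ y ∈ U₀, ∀ t ∈ Set.Ioo (-α) α,
      HasDerivAt (fun s => 𝔽 (-s) y) (-X (𝔽 (-t) y)) t := by
    intro y hy t ht
    have h1 := hflow y hy (-t) ⟨by linarith [ht.2], by linarith [ht.1]⟩
    have h2 := h1.scomp t (hasDerivAt_neg t)
    simpa [Function.comp_def] using h2
  obtain ⟨Wr, hWr0, hWr⟩ := core hU (fun y => -X y) β hLipneg (fun y => -(DX y))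
    (fun y hy => (hDX y hy).neg) (hDXcont.neg) α hα U₀ hU₀ hU₀U (fun t y => 𝔽 (-t) y)
    hmem' h0' hflow' x hx (fun {G} hG hGb {a} ha => linODE hG hGb ha)
  -- glue
  set A : ℝ → E →L[ℝ] E := fun t => if 0 ≤ t then Wf t else Wr (-t) with hAdef
  have hApos : ∀ t, 0 ≤ t → A t = Wf t := fun t ht => if_pos ht
  have hAneg : ∀ t, t ≤ (0:ℝ) → A t = Wr (-t) := by
    intro t ht
    rcases ht.eq_or_lt with rfl | h
    · rw [hApos 0 le_rfl, hWf0, neg_zero, hWr0]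
    · exact if_neg (by linarith)
  have hA0 : A 0 = 1 := by rw [hApos 0 le_rfl, hWf0]
  -- Fréchet derivative claim
  have hAfder : ∀ t ∈ Set.Ioo (-α) α, HasFDerivAt (fun y => 𝔽 t y) (A t) x := by
    intro t ht
    rcases le_or_gt 0 t with h | h
    · rw [hApos t h]; exact (hWf t ⟨h, ht.2⟩).2
    · rw [hAneg t h.le]
      have := (hWr (-t) ⟨by linarith, by linarith [ht.1]⟩).2
      simpa using this
  -- ODE claim
  have hAode : ∀ t ∈ Set.Ioo (-α) α, HasDerivAt A ((DX (𝔽 t x)).comp (A t)) t := by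
    intro t ht
    rcases lt_trichotomy t 0 with hneg | rfl | hpos
    · -- negative side
      have hd := (hWr (-t) ⟨by linarith, by linarith [ht.1]⟩).1
      have hcomp := hd.scomp t (hasDerivAt_neg t)
      have hval : (-1 : ℝ) • ((-(DX (𝔽 (- -t) x))).comp (Wr (-t)))
          = (DX (𝔽 t x)).comp (Wr (-t)) := by
        rw [neg_neg]
        simp [ContinuousLinearMap.neg_comp]
      rw [hval] at hcomp
      have heq : A =ᶠ[𝓝 t] fun s => Wr (-s) := by
        filter_upwards [Iio_mem_nhds hneg] with s hs
        exact hAneg s (le_of_lt hs)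
      rw [hAneg t hneg.le]
      exact heq.hasDerivAt_iff.mpr hcomp
    · -- t = 0
      have hright : HasDerivWithinAt A ((DX (𝔽 0 x)).comp (1 : E →L[ℝ] E)) (Ici 0) 0 := by
        have hd := (hWf 0 ⟨le_rfl, hα⟩).1
        rw [hWf0] at hd
        exact hd.hasDerivWithinAt.congr (fun s hs => hApos s hs) (hApos 0 le_rfl)
      have hleft : HasDerivWithinAt A ((DX (𝔽 0 x)).comp (1 : E →L[ℝ] E)) (Iic 0) 0 := by
        have hd := (hWr 0 ⟨le_rfl, hα⟩).1
        have hd' : HasDerivAt Wr ((-(DX (𝔽 (-(0:ℝ)) x))).comp (Wr (-(0:ℝ)))) (-(0:ℝ)) := by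
          simpa using hd
        have hcomp := hd'.scomp (0:ℝ) (hasDerivAt_neg (0:ℝ))
        have hcomp' : HasDerivAt (fun s => Wr (-s)) ((DX (𝔽 0 x)).comp (1 : E →L[ℝ] E)) 0 := by
          simpa [hWr0, ContinuousLinearMap.neg_comp, Function.comp_def] using hcomp
        exact hcomp'.hasDerivWithinAt.congr (fun s hs => hAneg s hs) (hAneg 0 le_rfl)
      have hunion := hleft.union hright
      rw [Iic_union_Ici] at hunion
      rw [hA0]
      exact hasDerivWithinAt_univ.mp hunion
    · -- positive side
      have heq : A =ᶠ[𝓝 t] Wf := by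
        filter_upwards [Ioi_mem_nhds hpos] with s hs
        exact hApos s (le_of_lt hs)
      rw [hApos t hpos.le]
      exact heq.hasDerivAt_iff.mpr (hWf t ⟨hpos.le, ht.2⟩).1
  refine ⟨A, hAfder, by rw [hA0, ContinuousLinearMap.one_def], hAode, ?_⟩
  -- uniqueness
  intro B hB0 hBode t ht
  have habs : |t| < α := abs_lt.mpr ⟨ht.1, ht.2⟩
  set c : ℝ := (|t| + α)/2 with hcdef
  have hc1 : |t| < c := by rw [hcdef]; linarith
  have hc2 : c < α := by rw [hcdef]; linarith
  have hc0 : 0 < c := lt_of_le_of_lt (abs_nonneg t) hc1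
  have hcle : -c ≤ c := by linarith
  have hproj : ∀ τ : ℝ, (projIcc (-c) c hcle τ : ℝ) ∈ Set.Ioo (-α) α := fun τ =>
    ⟨by linarith [(projIcc (-c) c hcle τ).2.1], by linarith [(projIcc (-c) c hcle τ).2.2]⟩
  set v : ℝ → (E →L[ℝ] E) → (E →L[ℝ] E) :=
    fun τ M => (DX (𝔽 ((projIcc (-c) c hcle τ : ℝ)) x)).comp M with hv
  have hlipv : ∀ τ, LipschitzOnWith β (v τ) (univ : Set (E →L[ℝ] E)) := by
    intro τ
    apply LipschitzWith.lipschitzOnWith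
    apply LipschitzWith.of_dist_le_mul
    intro M M'
    rw [dist_eq_norm, dist_eq_norm, hv]
    simp only [← ContinuousLinearMap.comp_sub]
    exact le_trans (ContinuousLinearMap.opNorm_comp_le _ _)
      (mul_le_mul_of_nonneg_right (hβ _ (hmem _ (hproj τ) x hx)) (norm_nonneg _))
  have hsub : Set.Ioo (-c) c ⊆ Set.Ioo (-α) α := fun τ hτ =>
    ⟨by linarith [hτ.1], by linarith [hτ.2]⟩
  have hvB : ∀ τ ∈ Set.Ioo (-c) c, HasDerivAt B (v τ (B τ)) τ ∧ B τ ∈ univ := by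
    intro τ hτ
    have : v τ (B τ) = (DX (𝔽 τ x)).comp (B τ) := by
      simp only [hv, projIcc_of_mem hcle (⟨hτ.1.le, hτ.2.le⟩ : τ ∈ Icc (-c) c)]
    rw [this]
    exact ⟨hBode τ (hsub hτ), mem_univ _⟩
  have hvA : ∀ τ ∈ Set.Ioo (-c) c, HasDerivAt A (v τ (A τ)) τ ∧ A τ ∈ univ := by
    intro τ hτ
    have : v τ (A τ) = (DX (𝔽 τ x)).comp (A τ) := by
      simp only [hv, projIcc_of_mem hcle (⟨hτ.1.le, hτ.2.le⟩ : τ ∈ Icc (-c) c)]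
    rw [this]
    exact ⟨hAode τ (hsub hτ), mem_univ _⟩
  have h00 : (0:ℝ) ∈ Set.Ioo (-c) c := ⟨by linarith, hc0⟩
  have heq0 : B 0 = A 0 := by rw [hB0, hA0, ContinuousLinearMap.one_def]
  have := ODE_solution_unique_of_mem_Ioo (fun τ _ => hlipv τ) h00 hvB hvA heq0
  exact this (abs_lt.mp hc1 |>.imp (fun h => h) (fun h => h) |> fun h => ⟨h.1, h.2⟩)
end

section
/- Let E be a real Banach space, U ⊆ E an open set that is star-shaped with respect to 0, and ω : U → Λ²(E;ℝ) a C¹ map into the space of continuous alternating bilinear forms on E which is closed, i.e., for all x ∈ U and all u, v, w ∈ E: Dω(x)(u)(v,w) + Dω(x)(v)(w,u) + Dω(x)(w)(u,v) = 0. Define the 1-form α : U → E' by α(x)(v) := ∫₀¹ t·ω(tx)(x, v) dt. Then α(0) = 0, α is C¹, and dα = ω, i.e., for all x ∈ U and u, v ∈ E: Dα(x)(u)(v) − Dα(x)(v)(u) = ω(x)(u,v). -/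
set_option maxHeartbeats 1000000
set_option synthInstance.maxHeartbeats 1000000

open MeasureTheory Metric Set

noncomputable instance poinNACG3 {E : Type*} [NormedAddCommGroup E] [NormedSpace ℝ E] :
    NormedAddCommGroup (E →L[ℝ] E →L[ℝ] E →L[ℝ] ℝ) :=
  @ContinuousLinearMap.toNormedAddCommGroup ℝ ℝ E (E →L[ℝ] E →L[ℝ] ℝ) _ _ _ _ _ _ (RingHom.id ℝ) _

noncomputable instance poinENAM2 {E : Type*} [NormedAddCommGroup E] [NormedSpace ℝ E] :
    ENormedAddMonoid (E →L[ℝ] E →L[ℝ] ℝ) :=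
  @NormedAddGroup.toENormedAddMonoid (E →L[ℝ] E →L[ℝ] ℝ) _

noncomputable instance poinPMS2 {E : Type*} [NormedAddCommGroup E] [NormedSpace ℝ E] :
    TopologicalSpace.PseudoMetrizableSpace (E →L[ℝ] E →L[ℝ] ℝ) :=
  (fun (F : Type _) [NormedAddCommGroup F] =>
    (inferInstance : TopologicalSpace.PseudoMetrizableSpace F)) (E →L[ℝ] E →L[ℝ] ℝ)

noncomputable instance poinCA2 {E : Type*} [NormedAddCommGroup E] [NormedSpace ℝ E] :
    ContinuousAdd (E →L[ℝ] E →L[ℝ] ℝ) :=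
  (fun (F : Type _) [NormedAddCommGroup F] => (inferInstance : ContinuousAdd F)) (E →L[ℝ] E →L[ℝ] ℝ)

private theorem aux_bound_near_compact {E F : Type*} [NormedAddCommGroup E] [NormedSpace ℝ E]
    [NormedAddCommGroup F] {U : Set E} (hU : IsOpen U) {K : Set E} (hK : IsCompact K)
    (hKU : K ⊆ U) {f : E → F} (hf : ContinuousOn f U) :
    ∃ δ > 0, ∃ C : ℝ, Metric.thickening δ K ⊆ U ∧ ∀ y ∈ Metric.thickening δ K, ‖f y‖ ≤ C := by
  obtain ⟨M, hM⟩ := hK.exists_bound_of_continuousOn (hf.mono hKU)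
  have hVopen : IsOpen (U ∩ (fun y => ‖f y‖) ⁻¹' Set.Iio (M + 1)) :=
    hf.norm.isOpen_inter_preimage hU isOpen_Iio
  have hKV : K ⊆ U ∩ (fun y => ‖f y‖) ⁻¹' Set.Iio (M + 1) :=
    fun k hk => ⟨hKU hk, lt_of_le_of_lt (hM k hk) (lt_add_one M)⟩
  obtain ⟨δ, hδ, hsub⟩ := hK.exists_thickening_subset_open hVopen hKV
  exact ⟨δ, hδ, M + 1, hsub.trans Set.inter_subset_left, fun y hy => le_of_lt (hsub hy).2⟩

/-- The candidate derivative of the primitive 1-form. -/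
private noncomputable def poinPhi {E : Type*} [NormedAddCommGroup E] [NormedSpace ℝ E]
    (ω : E → E →L[ℝ] E →L[ℝ] ℝ) (x : E) (t : ℝ) : E →L[ℝ] E →L[ℝ] ℝ :=
  t • (ω (t • x) + ((fderiv ℝ ω (t • x)).comp (t • ContinuousLinearMap.id ℝ E)).flip x)

private theorem poinPhi_apply {E : Type*} [NormedAddCommGroup E] [NormedSpace ℝ E]
    (ω : E → E →L[ℝ] E →L[ℝ] ℝ) (x : E) (t : ℝ) (u v : E) :
    poinPhi ω x t u v = t * (ω (t • x) u v) + t * (t * (fderiv ℝ ω (t • x) u x v)) := by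
  simp [poinPhi, ContinuousLinearMap.smul_apply, ContinuousLinearMap.add_apply,
    ContinuousLinearMap.flip_apply, ContinuousLinearMap.comp_apply,
    ContinuousLinearMap.id_apply, _root_.map_smul, smul_eq_mul]

private theorem poinPhi_norm_bound {E : Type*} [NormedAddCommGroup E] [NormedSpace ℝ E]
    (ω : E → E →L[ℝ] E →L[ℝ] ℝ) (x : E) (t : ℝ) {C₁ C₂ R : ℝ}
    (hb1 : ‖ω (t • x)‖ ≤ C₁) (hb2 : ‖fderiv ℝ ω (t • x)‖ ≤ C₂) (ht1 : ‖t‖ ≤ 1)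
    (hxn : ‖x‖ ≤ R) (hR : 0 ≤ R) :
    ‖poinPhi ω x t‖ ≤ C₁ + C₂ * R := by
  have hC₂0 : (0:ℝ) ≤ C₂ := le_trans (norm_nonneg _) hb2
  have h8 : ‖t • ContinuousLinearMap.id ℝ E‖ ≤ 1 := by
    have := ContinuousLinearMap.opNorm_smul_le t (ContinuousLinearMap.id ℝ E)
    have hid : ‖ContinuousLinearMap.id ℝ E‖ ≤ 1 := ContinuousLinearMap.norm_id_le
    nlinarith [norm_nonneg (ContinuousLinearMap.id ℝ E), norm_nonneg t]
  have h7 : ‖(fderiv ℝ ω (t • x)).comp (t • ContinuousLinearMap.id ℝ E)‖ ≤ C₂ := by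
    refine le_trans (ContinuousLinearMap.opNorm_comp_le _ _) ?_
    nlinarith [norm_nonneg (fderiv ℝ ω (t • x)), norm_nonneg (t • ContinuousLinearMap.id ℝ E)]
  have hM : ‖((fderiv ℝ ω (t • x)).comp (t • ContinuousLinearMap.id ℝ E)).flip x‖
      ≤ C₂ * R := by
    have h5 := ContinuousLinearMap.le_opNorm
      ((fderiv ℝ ω (t • x)).comp (t • ContinuousLinearMap.id ℝ E)).flip x
    rw [ContinuousLinearMap.opNorm_flip] at h5
    nlinarith [norm_nonneg x, norm_nonneg
      ((fderiv ℝ ω (t • x)).comp (t • ContinuousLinearMap.id ℝ E))]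
  have h9 : ‖ω (t • x) + ((fderiv ℝ ω (t • x)).comp (t • ContinuousLinearMap.id ℝ E)).flip x‖
      ≤ ‖ω (t • x)‖ + ‖((fderiv ℝ ω (t • x)).comp (t • ContinuousLinearMap.id ℝ E)).flip x‖ := by
    exact norm_add_le (ω (t • x))
      (((fderiv ℝ ω (t • x)).comp (t • ContinuousLinearMap.id ℝ E)).flip x)
  have hs : ‖poinPhi ω x t‖ ≤ ‖t‖ *
      ‖ω (t • x) + ((fderiv ℝ ω (t • x)).comp (t • ContinuousLinearMap.id ℝ E)).flip x‖ := by
    exact ContinuousLinearMap.opNorm_smul_le t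
      (ω (t • x) + ((fderiv ℝ ω (t • x)).comp (t • ContinuousLinearMap.id ℝ E)).flip x)
  nlinarith [norm_nonneg
    (ω (t • x) + ((fderiv ℝ ω (t • x)).comp (t • ContinuousLinearMap.id ℝ E)).flip x),
    norm_nonneg t]

/-- **Poincaré lemma for 2-forms.** Let `E` be a real Banach space, `U ⊆ E` an
open set star-shaped with respect to `0`, and `ω : U → Λ²(E;ℝ)` a `C¹` closed 2-form (the
cyclic sum of its Fréchet derivative vanishes).  Define the 1-form
`α(x)(v) = ∫₀¹ t · ω(t x)(x, v) dt`.  Then `α 0 = 0`, `α` is `C¹` on `U`, and `dα = ω`, i.e.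
`Dα(x)(u)(v) - Dα(x)(v)(u) = ω(x)(u, v)` for all `x ∈ U` and `u, v ∈ E`. -/
theorem poincare_lemma_two_form
    {E : Type*} [NormedAddCommGroup E] [NormedSpace ℝ E] [CompleteSpace E]
    {U : Set E} (hU : IsOpen U) (h0U : (0 : E) ∈ U)
    (hstar : ∀ x ∈ U, ∀ t ∈ Set.Icc (0 : ℝ) 1, t • x ∈ U)
    (ω : E → E →L[ℝ] E →L[ℝ] ℝ)
    (hω_alt : ∀ x : E, ∀ v : E, ω x v v = 0)
    (hω : ContDiffOn ℝ 1 ω U)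
    (hclosed : ∀ x ∈ U, ∀ u v w : E,
      fderiv ℝ ω x u v w + fderiv ℝ ω x v w u + fderiv ℝ ω x w u v = 0)
    (α : E → E →L[ℝ] ℝ)
    (hα_def : ∀ x ∈ U, α x = ∫ t in (0 : ℝ)..1, t • ((ω (t • x)) x)) :
    α 0 = 0 ∧ ContDiffOn ℝ 1 α U ∧
      ∀ x ∈ U, ∀ u v : E, fderiv ℝ α x u v - fderiv ℝ α x v u = ω x u v := by
  -- basic differentiability / continuity facts about ω
  have hωdiff : ∀ y ∈ U, DifferentiableAt ℝ ω y := fun y hy =>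
    (hω.differentiableOn one_ne_zero).differentiableAt (hU.mem_nhds hy)
  have hωcont : ContinuousOn ω U := hω.continuousOn
  have hDcont : ContinuousOn (fderiv ℝ ω) U := hω.continuousOn_fderiv_of_isOpen hU le_rfl
  -- skew-symmetry of ω
  have hskew : ∀ y u v : E, ω y u v = - ω y v u := by
    intro y u v
    have h := hω_alt y (u + v)
    simp only [map_add, ContinuousLinearMap.add_apply, hω_alt y u, hω_alt y v] at h
    linarith [h]
  -- the derivative of ω is alternating in its last two arguments
  have hD0 : ∀ y ∈ U, ∀ w v : E, fderiv ℝ ω y w v v = 0 := by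
    intro y hy w v
    set L : (E →L[ℝ] E →L[ℝ] ℝ) →L[ℝ] ℝ :=
      (ContinuousLinearMap.apply ℝ ℝ v).comp (ContinuousLinearMap.apply ℝ (E →L[ℝ] ℝ) v) with hL
    have h1 : HasFDerivAt (⇑L ∘ ω) (L.comp (fderiv ℝ ω y)) y :=
      by have h := L.hasFDerivAt.comp (𝕜 := ℝ) (F := E →L[ℝ] E →L[ℝ] ℝ) y (hωdiff y hy).hasFDerivAt; exact h
    have h2 : (⇑L ∘ ω) = fun _ => (0:ℝ) := by
      funext z
      simp [hL, Function.comp, ContinuousLinearMap.comp_apply,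
        ContinuousLinearMap.apply_apply, hω_alt]
    rw [h2] at h1
    have h3 : L.comp (fderiv ℝ ω y) = 0 := h1.unique (hasFDerivAt_const 0 y)
    calc fderiv ℝ ω y w v v = L.comp (fderiv ℝ ω y) w := by
          simp [hL, ContinuousLinearMap.comp_apply, ContinuousLinearMap.apply_apply]
      _ = 0 := by rw [h3]; simp
  have hDskew : ∀ y ∈ U, ∀ w u v : E, fderiv ℝ ω y w u v = - fderiv ℝ ω y w v u := by
    intro y hy w u v
    have h := hD0 y hy w (u + v)
    simp only [map_add, ContinuousLinearMap.add_apply] at h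
    linarith [hD0 y hy w u, hD0 y hy w v]
  -- continuity of flip
  have hflip : Continuous (fun A : E →L[ℝ] E →L[ℝ] E →L[ℝ] ℝ => A.flip) := by
    rw [← ContinuousLinearMap.coe_flipₗᵢ (𝕜 := ℝ)]
    exact (ContinuousLinearMap.flipₗᵢ ℝ E E (E →L[ℝ] ℝ)).continuous
  -- continuity of the integrands, in the time variable
  have hFc : ∀ x : E, (∀ t ∈ Set.Icc (0:ℝ) 1, t • x ∈ U) →
      ContinuousOn (fun t => t • (ω (t • x) x)) (Set.Icc (0:ℝ) 1) := by
    intro x hx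
    have hsm : ContinuousOn (fun t : ℝ => t • x) (Set.Icc (0:ℝ) 1) :=
      (continuous_id.smul continuous_const).continuousOn
    exact continuousOn_id.smul ((hωcont.comp hsm hx).clm_apply continuousOn_const)
  have hΦc : ∀ x : E, (∀ t ∈ Set.Icc (0:ℝ) 1, t • x ∈ U) →
      ContinuousOn (fun t => poinPhi ω x t) (Set.Icc (0:ℝ) 1) := by
    intro x hx
    have hsm : ContinuousOn (fun t : ℝ => t • x) (Set.Icc (0:ℝ) 1) :=
      (continuous_id.smul continuous_const).continuousOn
    have h1 : ContinuousOn (fun t : ℝ => ω (t • x)) (Set.Icc (0:ℝ) 1) := hωcont.comp hsm hx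
    have h2 : ContinuousOn (fun t : ℝ => fderiv ℝ ω (t • x)) (Set.Icc (0:ℝ) 1) :=
      hDcont.comp hsm hx
    have h3 : ContinuousOn (fun t : ℝ =>
        (fderiv ℝ ω (t • x)).comp (t • ContinuousLinearMap.id ℝ E)) (Set.Icc (0:ℝ) 1) :=
      h2.clm_comp (𝕜 := ℝ) (E := E) (F := E) (G := E →L[ℝ] E →L[ℝ] ℝ) ((continuous_id.smul continuous_const).continuousOn)
    exact continuousOn_id.smul
      (h1.add ((hflip.comp_continuousOn h3).clm_apply continuousOn_const))
  -- continuity of `poinPhi ω · t` on `U`, for fixed `t ∈ [0,1]`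
  have hΦcx : ∀ t ∈ Set.Icc (0:ℝ) 1, ContinuousOn (fun x => poinPhi ω x t) U := by
    intro t ht
    have hsm : ContinuousOn (fun x : E => t • x) U :=
      (continuous_const.smul continuous_id).continuousOn
    have hmap : ∀ x ∈ U, t • x ∈ U := fun x hx => hstar x hx t ht
    have h1 : ContinuousOn (fun x : E => ω (t • x)) U := hωcont.comp hsm hmap
    have h2 : ContinuousOn (fun x : E => fderiv ℝ ω (t • x)) U := hDcont.comp hsm hmap
    have h4 : ContinuousOn (fun x : E =>
        ((fderiv ℝ ω (t • x)).comp (t • ContinuousLinearMap.id ℝ E)).flip x) U :=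
      (hflip.comp_continuousOn (h2.clm_comp (𝕜 := ℝ) (E := E) (F := E) (G := E →L[ℝ] E →L[ℝ] ℝ) continuousOn_const)).clm_apply continuousOn_id
    exact (h1.add h4).const_smul t
  have hIcc : Set.uIcc (0:ℝ) 1 = Set.Icc 0 1 := Set.uIcc_of_le zero_le_one
  have hIoc : Set.uIoc (0:ℝ) 1 = Set.Ioc 0 1 := Set.uIoc_of_le zero_le_one
  -- integrability of the integrands
  have hFint : ∀ x : E, (∀ t ∈ Set.Icc (0:ℝ) 1, t • x ∈ U) →
      IntervalIntegrable (fun t => t • (ω (t • x) x)) volume 0 1 := by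
    intro x hx
    exact (by rw [hIcc]; exact hFc x hx : ContinuousOn _ (Set.uIcc (0:ℝ) 1)).intervalIntegrable
  have hΦint : ∀ x : E, (∀ t ∈ Set.Icc (0:ℝ) 1, t • x ∈ U) →
      IntervalIntegrable (fun t => poinPhi ω x t) volume 0 1 := by
    intro x hx
    exact (by rw [hIcc]; exact hΦc x hx : ContinuousOn (fun t => poinPhi ω x t)
      (Set.uIcc (0:ℝ) 1)).intervalIntegrable (E := E →L[ℝ] E →L[ℝ] ℝ)
  -- the key step: differentiation under the integral sign, plus continuity of the result
  have hkey : ∀ x₀ ∈ U, HasFDerivAt α (∫ t in (0:ℝ)..1, poinPhi ω x₀ t) x₀ ∧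
      ContinuousAt (fun x => ∫ t in (0:ℝ)..1, poinPhi ω x t) x₀ := by
    intro x₀ hx₀
    set K : Set E := (fun t : ℝ => t • x₀) '' Set.Icc 0 1 with hK
    have hKcpt : IsCompact K := isCompact_Icc.image (continuous_id.smul continuous_const)
    have hKU : K ⊆ U := by rintro y ⟨t, ht, rfl⟩; exact hstar x₀ hx₀ t ht
    obtain ⟨δ₁, hδ₁, C₁, hsub₁, hC₁⟩ := aux_bound_near_compact (f := ω) hU hKcpt hKU hωcont
    obtain ⟨δ₂, hδ₂, C₂, hsub₂, hC₂⟩ := aux_bound_near_compact (f := fderiv ℝ ω) hU hKcpt hKU hDcont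
    set δ := min δ₁ δ₂ with hδdef
    have hδ : 0 < δ := lt_min hδ₁ hδ₂
    have hthick : ∀ x ∈ ball x₀ δ, ∀ t ∈ Set.Icc (0:ℝ) 1,
        t • x ∈ thickening δ₁ K ∧ t • x ∈ thickening δ₂ K := by
      intro x hx t ht
      have hKmem : t • x₀ ∈ K := ⟨t, ht, rfl⟩
      have hdist : dist (t • x) (t • x₀) < δ := by
        calc dist (t • x) (t • x₀) = ‖t‖ * dist x x₀ := dist_smul₀ t x x₀
          _ ≤ 1 * dist x x₀ := by
              apply mul_le_mul_of_nonneg_right _ dist_nonneg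
              rw [Real.norm_eq_abs, abs_le]; constructor <;> linarith [ht.1, ht.2]
          _ < δ := by rw [one_mul]; exact mem_ball.1 hx
      exact ⟨Metric.mem_thickening_iff.2
          ⟨t • x₀, hKmem, lt_of_lt_of_le hdist (min_le_left _ _)⟩,
        Metric.mem_thickening_iff.2
          ⟨t • x₀, hKmem, lt_of_lt_of_le hdist (min_le_right _ _)⟩⟩
    have hxU : ∀ x ∈ ball x₀ δ, ∀ t ∈ Set.Icc (0:ℝ) 1, t • x ∈ U :=
      fun x hx t ht => hsub₁ (hthick x hx t ht).1
    -- the uniform bound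
    have hbound : ∀ x ∈ ball x₀ δ, ∀ t ∈ Set.Icc (0:ℝ) 1,
        ‖poinPhi ω x t‖ ≤ C₁ + C₂ * (‖x₀‖ + δ) := by
      intro x hx t ht
      have hb1 : ‖ω (t • x)‖ ≤ C₁ := hC₁ _ (hthick x hx t ht).1
      have hb2 : ‖fderiv ℝ ω (t • x)‖ ≤ C₂ := hC₂ _ (hthick x hx t ht).2
      have ht1 : ‖t‖ ≤ 1 := by
        rw [Real.norm_eq_abs, abs_le]; constructor <;> linarith [ht.1, ht.2]
      have hxn : ‖x‖ ≤ ‖x₀‖ + δ := by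
        rw [mem_ball, dist_eq_norm] at hx
        calc ‖x‖ = ‖x₀ + (x - x₀)‖ := by rw [add_sub_cancel]
          _ ≤ ‖x₀‖ + ‖x - x₀‖ := norm_add_le _ _
          _ ≤ ‖x₀‖ + δ := by linarith [hx]
      exact poinPhi_norm_bound ω x t hb1 hb2 ht1 hxn (by positivity)
    -- measurability statements
    have hFmeas : ∀ᶠ x in nhds x₀,
        AEStronglyMeasurable (fun t => t • (ω (t • x) x)) (volume.restrict (Set.uIoc (0:ℝ) 1)) := by
      refine Filter.eventually_of_mem (Metric.ball_mem_nhds x₀ hδ) (fun x hx => ?_)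
      exact (hFint x (hxU x hx)).def'.aestronglyMeasurable
    have hΦmeas : ∀ᶠ x in nhds x₀,
        AEStronglyMeasurable (fun t => poinPhi ω x t) (volume.restrict (Set.uIoc (0:ℝ) 1)) := by
      refine Filter.eventually_of_mem (Metric.ball_mem_nhds x₀ hδ) (fun x hx => ?_)
      exact (hΦint x (hxU x hx)).def'.aestronglyMeasurable
    have hx₀ball : x₀ ∈ ball x₀ δ := mem_ball_self hδ
    have hboundae : ∀ᵐ t ∂volume, t ∈ Set.uIoc (0:ℝ) 1 →
        ∀ x ∈ ball x₀ δ, ‖poinPhi ω x t‖ ≤ C₁ + C₂ * (‖x₀‖ + δ) := by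
      refine Filter.Eventually.of_forall (fun t ht x hx => ?_)
      rw [hIoc] at ht
      exact hbound x hx t ⟨le_of_lt ht.1, ht.2⟩
    have hdiff : ∀ᵐ t ∂volume, t ∈ Set.uIoc (0:ℝ) 1 →
        ∀ x ∈ ball x₀ δ, HasFDerivAt (fun x => t • (ω (t • x) x)) (poinPhi ω x t) x := by
      refine Filter.Eventually.of_forall (fun t ht x hx => ?_)
      rw [hIoc] at ht
      have hmem : t • x ∈ U := hxU x hx t ⟨le_of_lt ht.1, ht.2⟩
      have hin : HasFDerivAt (fun x : E => t • x) (t • ContinuousLinearMap.id ℝ E) x :=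
        (hasFDerivAt_id x).const_smul t
      have hc : HasFDerivAt (fun x => ω (t • x))
          ((fderiv ℝ ω (t • x)).comp (t • ContinuousLinearMap.id ℝ E)) x :=
        ((hωdiff (t • x) hmem).hasFDerivAt).comp (𝕜 := ℝ) (G := E →L[ℝ] E →L[ℝ] ℝ) x hin
      have h := (hc.clm_apply (hasFDerivAt_id x)).const_smul t
      refine HasFDerivAt.congr_fderiv (𝕜 := ℝ) (F := E →L[ℝ] ℝ) h ?_
      simp [poinPhi, ContinuousLinearMap.comp_id]
    have main := intervalIntegral.hasFDerivAt_integral_of_dominated_of_fderiv_le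
      (F := fun x t => t • (ω (t • x) x)) (F' := fun x t => poinPhi ω x t)
      (bound := fun _ => C₁ + C₂ * (‖x₀‖ + δ)) (Metric.ball_mem_nhds x₀ hδ) hFmeas (hFint x₀ (hxU x₀ hx₀ball))
      ((hΦint x₀ (hxU x₀ hx₀ball)).def'.aestronglyMeasurable) hboundae
      intervalIntegrable_const hdiff
    constructor
    · exact main.congr_of_eventuallyEq
        (Filter.eventuallyEq_of_mem (hU.mem_nhds hx₀) (fun x hx => hα_def x hx))
    · apply intervalIntegral.continuousAt_of_dominated_interval hΦmeas
        (Filter.eventually_of_mem (Metric.ball_mem_nhds x₀ hδ) (fun x hx => by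
          refine Filter.Eventually.of_forall (fun t ht => ?_)
          rw [hIoc] at ht
          exact hbound x hx t ⟨le_of_lt ht.1, ht.2⟩)) intervalIntegrable_const
      refine Filter.Eventually.of_forall (fun t ht => ?_)
      rw [hIoc] at ht
      exact (hΦcx t ⟨le_of_lt ht.1, ht.2⟩).continuousAt (hU.mem_nhds hx₀)
  refine ⟨?_, ?_, ?_⟩
  · -- α 0 = 0
    rw [hα_def 0 h0U]
    simp
  · -- α is C¹ on U
    have h01 : (1 : WithTop ℕ∞) = 0 + 1 := by norm_num
    rw [h01, contDiffOn_succ_iff_fderiv_of_isOpen hU]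
    refine ⟨fun x hx => ((hkey x hx).1.differentiableAt).differentiableWithinAt, ?_, ?_⟩
    · intro h; simp at h
    · rw [contDiffOn_zero]
      intro x hx
      exact ((hkey x hx).2.congr (Filter.eventuallyEq_of_mem (hU.mem_nhds hx)
        (fun z hz => ((hkey z hz).1.fderiv).symm))).continuousWithinAt
  · -- dα = ω
    intro x hx u v
    have hseg : ∀ t ∈ Set.Icc (0:ℝ) 1, t • x ∈ U := fun t ht => hstar x hx t ht
    have hΦi := hΦint x hseg
    have hΦcu : ContinuousOn (fun t => poinPhi ω x t u) (Set.Icc (0:ℝ) 1) :=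
      (hΦc x hseg).clm_apply continuousOn_const
    have hΦcv : ContinuousOn (fun t => poinPhi ω x t v) (Set.Icc (0:ℝ) 1) :=
      (hΦc x hseg).clm_apply continuousOn_const
    have hΦiu : IntervalIntegrable (fun t => poinPhi ω x t u) volume 0 1 :=
      (by rw [hIcc]; exact hΦcu : ContinuousOn _ (Set.uIcc (0:ℝ) 1)).intervalIntegrable
    have hΦiv : IntervalIntegrable (fun t => poinPhi ω x t v) volume 0 1 :=
      (by rw [hIcc]; exact hΦcv : ContinuousOn _ (Set.uIcc (0:ℝ) 1)).intervalIntegrable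
    have hruv : IntervalIntegrable (fun t => poinPhi ω x t u v) volume 0 1 := by
      refine (show ContinuousOn _ (Set.uIcc (0:ℝ) 1) from ?_).intervalIntegrable
      rw [hIcc]; exact hΦcu.clm_apply continuousOn_const
    have hrvu : IntervalIntegrable (fun t => poinPhi ω x t v u) volume 0 1 := by
      refine (show ContinuousOn _ (Set.uIcc (0:ℝ) 1) from ?_).intervalIntegrable
      rw [hIcc]; exact hΦcv.clm_apply continuousOn_const
    have e1 : fderiv ℝ α x u v = ∫ t in (0:ℝ)..1, poinPhi ω x t u v := by
      rw [(hkey x hx).1.fderiv, ContinuousLinearMap.intervalIntegral_apply hΦi u,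
        ContinuousLinearMap.intervalIntegral_apply hΦiu v]
    have e2 : fderiv ℝ α x v u = ∫ t in (0:ℝ)..1, poinPhi ω x t v u := by
      rw [(hkey x hx).1.fderiv, ContinuousLinearMap.intervalIntegral_apply hΦi v,
        ContinuousLinearMap.intervalIntegral_apply hΦiv u]
    have hEqOn : Set.EqOn (fun t => poinPhi ω x t u v - poinPhi ω x t v u)
        (fun t => 2 * t * (ω (t • x) u v) + t ^ 2 * (fderiv ℝ ω (t • x) x u v))
        (Set.uIcc (0:ℝ) 1) := by
      intro t ht
      rw [hIcc] at ht
      have hyU : t • x ∈ U := hseg t ht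
      have eskew : ω (t • x) v u = - ω (t • x) u v := hskew (t • x) v u
      have eclosed : fderiv ℝ ω (t • x) u x v - fderiv ℝ ω (t • x) v x u
          = fderiv ℝ ω (t • x) x u v := by
        have h := hclosed (t • x) hyU u x v
        have s1 := hDskew (t • x) hyU x v u
        have s2 := hDskew (t • x) hyU v u x
        linarith
      simp only [poinPhi_apply]
      linear_combination (-t) * eskew + (t * t) * eclosed
    have hderiv : ∀ t ∈ Set.uIcc (0:ℝ) 1,
        HasDerivAt (fun t : ℝ => t ^ 2 * (ω (t • x) u v))
          (2 * t * (ω (t • x) u v) + t ^ 2 * (fderiv ℝ ω (t • x) x u v)) t := by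
      intro t ht
      rw [hIcc] at ht
      have hyU : t • x ∈ U := hseg t ht
      have h1 : HasDerivAt (fun t : ℝ => t • x) x t := by
        simpa using (hasDerivAt_id t).smul_const x
      have h2 : HasDerivAt (fun t : ℝ => ω (t • x)) (fderiv ℝ ω (t • x) x) t :=
        ((hωdiff _ hyU).hasFDerivAt).comp_hasDerivAt (𝕜 := ℝ) (E := E →L[ℝ] E →L[ℝ] ℝ) t h1
      set L : (E →L[ℝ] E →L[ℝ] ℝ) →L[ℝ] ℝ :=
        (ContinuousLinearMap.apply ℝ ℝ v).comp (ContinuousLinearMap.apply ℝ (E →L[ℝ] ℝ) u)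
        with hL
      have h3 : HasDerivAt (fun t : ℝ => ω (t • x) u v) (fderiv ℝ ω (t • x) x u v) t := by
        have := L.hasFDerivAt.comp_hasDerivAt (𝕜 := ℝ) (F := E →L[ℝ] E →L[ℝ] ℝ) t h2
        exact this
      have h4 := (hasDerivAt_pow 2 t).mul h3
      refine HasDerivAt.congr_deriv (𝕜 := ℝ) (F := ℝ) h4 ?_
      ring
    have hint' : IntervalIntegrable
        (fun t => 2 * t * (ω (t • x) u v) + t ^ 2 * (fderiv ℝ ω (t • x) x u v)) volume 0 1 := by
      refine (show ContinuousOn _ (Set.uIcc (0:ℝ) 1) from ?_).intervalIntegrable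
      rw [hIcc]
      have hsm : ContinuousOn (fun t : ℝ => t • x) (Set.Icc (0:ℝ) 1) :=
        (continuous_id.smul continuous_const).continuousOn
      have h1 : ContinuousOn (fun t : ℝ => ω (t • x) u v) (Set.Icc (0:ℝ) 1) :=
        (((hωcont.comp hsm hseg).clm_apply continuousOn_const).clm_apply continuousOn_const)
      have h2 : ContinuousOn (fun t : ℝ => fderiv ℝ ω (t • x) x u v) (Set.Icc (0:ℝ) 1) :=
        ((((hDcont.comp hsm hseg).clm_apply continuousOn_const).clm_apply
          continuousOn_const).clm_apply continuousOn_const)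
      exact ((continuousOn_const.mul continuousOn_id).mul h1).add
        ((continuousOn_id.pow 2).mul h2)
    rw [e1, e2, ← intervalIntegral.integral_sub hruv hrvu,
      intervalIntegral.integral_congr hEqOn,
      intervalIntegral.integral_eq_sub_of_hasDerivAt hderiv hint']
    simp
end

section
/- Let E be a real Banach space, U ⊆ E an open neighborhood of 0, ω : U → Λ²(E;ℝ) a smooth 2-form, ω₀ a constant 2-form, and ωᵗ(x) := (1−t)·ω₀ + t·ω(x) for t ∈ [0,1]. Let α : U → E' be a smooth 1-form with Dα(x)(u)(v) − Dα(x)(v)(u) = ω(x)(u,v) − ω₀(u,v) for all x, u, v (i.e., dα = ω − ω₀), and suppose each ωᵗ is closed. Let X : [0,1] × U → E be a smooth time-dependent vector field satisfying ωᵗ(x)(X(t,x), v) = −α(x)(v) for all t, x, v, and let 𝔽 : [0,1] × V → U (V ⊆ U an open neighborhood of 0) satisfy 𝔽(0,x) = x and ∂ₜ𝔽(t,x) = X(t, 𝔽(t,x)), with 𝔽 smooth. Then the pullback 𝔽ₜ*ωᵗ is constant in t; in particular, for all t ∈ [0,1], x ∈ V, and u, v ∈ E: ωᵗ(𝔽(t,x))(D_x𝔽(t,x)u,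 D_x𝔽(t,x)v) = ω₀(u,v). -/
open Set Filter ContinuousLinearMap

/-- A bilinear form vanishing on the diagonal is antisymmetric. -/
private lemma alt_antisym {E : Type*} [NormedAddCommGroup E] [NormedSpace ℝ E]
    (B : E →L[ℝ] E →L[ℝ] ℝ) (h : ∀ r : E, B r r = 0) (p q : E) : B p q = -B q p := by
  have h2 := h (p + q)
  simp only [map_add, ContinuousLinearMap.add_apply, h p, h q] at h2
  linarith

set_option maxHeartbeats 2000000 in
/-- **Moser's trick computation.** Let `E` be a real Banach space, `U` an open
neighborhood of `0`, `ω` a smooth 2-form on `U`, `ω₀` a constant 2-form, and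
`ωᵗ(x) = (1 - t) • ω₀ + t • ω x` for `t ∈ [0,1]`.  Let `α` be a smooth 1-form with
`dα = ω - ω₀`, suppose each `ωᵗ` is closed, let `X` be a smooth time-dependent vector field
with `ωᵗ(x)(X(t,x), ·) = -α(x)`, and let `𝔽` be a smooth isotopy with `𝔽(0,x) = x` and
`∂ₜ𝔽(t,x) = X(t, 𝔽(t,x))`.  Then the pullback `𝔽ₜ* ωᵗ` is constant in `t`: for all
`t ∈ [0,1]`, `x ∈ V` and `u, v ∈ E`,
`ωᵗ(𝔽(t,x))(D_x𝔽(t,x) u, D_x𝔽(t,x) v) = ω₀(u, v)`. -/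
theorem moser_isotopy_pullback_constant
    {E : Type*} [NormedAddCommGroup E] [NormedSpace ℝ E] [CompleteSpace E]
    {U : Set E} (hU : IsOpen U) (h0U : (0 : E) ∈ U)
    (ω : E → E →L[ℝ] E →L[ℝ] ℝ) (ω₀ : E →L[ℝ] E →L[ℝ] ℝ)
    (hω_alt : ∀ x : E, ∀ v : E, ω x v v = 0) (hω₀_alt : ∀ v : E, ω₀ v v = 0)
    (hω : ContDiffOn ℝ (⊤ : ℕ∞) ω U)
    (α : E → E →L[ℝ] ℝ) (hα : ContDiffOn ℝ (⊤ : ℕ∞) α U)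
    (hdα : ∀ x ∈ U, ∀ u v : E,
      fderiv ℝ α x u v - fderiv ℝ α x v u = ω x u v - ω₀ u v)
    (hclosed : ∀ t ∈ Set.Icc (0 : ℝ) 1, ∀ x ∈ U, ∀ u v w : E,
      fderiv ℝ (fun y : E => (1 - t) • ω₀ + t • ω y) x u v w +
        fderiv ℝ (fun y : E => (1 - t) • ω₀ + t • ω y) x v w u +
        fderiv ℝ (fun y : E => (1 - t) • ω₀ + t • ω y) x w u v = 0)
    (X : ℝ → E → E)
    (hX_smooth : ContDiffOn ℝ (⊤ : ℕ∞) (fun p : ℝ × E => X p.1 p.2)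
      (Set.Icc (0 : ℝ) 1 ×ˢ U))
    (hX : ∀ t ∈ Set.Icc (0 : ℝ) 1, ∀ x ∈ U, ∀ v : E,
      ((1 - t) • ω₀ + t • ω x) (X t x) v = -(α x v))
    (V : Set E) (hV : IsOpen V) (h0V : (0 : E) ∈ V) (hVU : V ⊆ U)
    (𝔽 : ℝ → E → E)
    (hmem : ∀ t ∈ Set.Icc (0 : ℝ) 1, ∀ x ∈ V, 𝔽 t x ∈ U)
    (h𝔽0 : ∀ x ∈ V, 𝔽 0 x = x)
    (h𝔽t : ∀ x ∈ V, ∀ t ∈ Set.Icc (0 : ℝ) 1,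
      HasDerivAt (fun s => 𝔽 s x) (X t (𝔽 t x)) t)
    (h𝔽_smooth : ContDiffOn ℝ (⊤ : ℕ∞) (fun p : ℝ × E => 𝔽 p.1 p.2)
      (Set.Icc (0 : ℝ) 1 ×ˢ V))
    (h𝔽x_smooth : ∀ t ∈ Set.Icc (0 : ℝ) 1, ContDiffOn ℝ (⊤ : ℕ∞) (𝔽 t) V) :
    ∀ t ∈ Set.Icc (0 : ℝ) 1, ∀ x ∈ V, ∀ u v : E,
      ((1 - t) • ω₀ + t • ω (𝔽 t x)) (fderiv ℝ (𝔽 t) x u) (fderiv ℝ (𝔽 t) x v) =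
        ω₀ u v := by
  intro t ht x hx u v
  have hone : (1 : WithTop ℕ∞) ≤ ((⊤ : ℕ∞) : WithTop ℕ∞) := by norm_cast
  have htwo : (1 + 1 : WithTop ℕ∞) ≤ ((⊤ : ℕ∞) : WithTop ℕ∞) := by norm_cast
  set G : ℝ × E → E := fun p => 𝔽 p.1 p.2 with hG_def
  set S : Set (ℝ × E) := Set.Icc (0 : ℝ) 1 ×ˢ V with hS_def
  have hSu : UniqueDiffOn ℝ S := (uniqueDiffOn_Icc one_pos).prod hV.uniqueDiffOn
  have hGd : DifferentiableOn ℝ G S := h𝔽_smooth.differentiableOn (by simp)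
  -- the space derivative of `𝔽 s` at `x`, for any `s ∈ [0,1]`
  have hA : ∀ s ∈ Set.Icc (0 : ℝ) 1,
      HasFDerivAt (𝔽 s)
        ((fderivWithin ℝ G S (s, x)).comp (ContinuousLinearMap.inr ℝ ℝ E)) x := by
    intro s hs
    have h1 : HasFDerivWithinAt G (fderivWithin ℝ G S (s, x)) S (s, x) :=
      (hGd (s, x) ⟨hs, hx⟩).hasFDerivWithinAt
    have h2 : HasFDerivAt (fun y : E => ((s, y) : ℝ × E))
        (ContinuousLinearMap.inr ℝ ℝ E) x := hasFDerivAt_prodMk_right s x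
    have h3 := h1.comp x h2.hasFDerivWithinAt (fun y (hy : y ∈ V) => ⟨hs, hy⟩)
    exact h3.hasFDerivAt (hV.mem_nhds hx)
  have hAeq : ∀ s ∈ Set.Icc (0 : ℝ) 1,
      fderiv ℝ (𝔽 s) x
        = (fderivWithin ℝ G S (s, x)).comp (ContinuousLinearMap.inr ℝ ℝ E) :=
    fun s hs => (hA s hs).fderiv
  set g : ℝ → ℝ := fun s =>
    ((1 - s) • ω₀ + s • ω (𝔽 s x)) (fderiv ℝ (𝔽 s) x u) (fderiv ℝ (𝔽 s) x v) with hg_def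
  -- continuity of g on [0,1]
  have hFx_cont : ContinuousOn (fun s : ℝ => 𝔽 s x) (Set.Icc 0 1) := by
    have := h𝔽_smooth.continuousOn.comp
      ((continuous_id.prodMk continuous_const).continuousOn)
      (fun s (hs : s ∈ Set.Icc (0:ℝ) 1) => show ((s, x) : ℝ × E) ∈ S from ⟨hs, hx⟩)
    exact this
  have hA_cont : ContinuousOn (fun s => fderiv ℝ (𝔽 s) x) (Set.Icc (0:ℝ) 1) := by
    have h1 : ContinuousOn (fderivWithin ℝ G S) S :=
      h𝔽_smooth.continuousOn_fderivWithin hSu hone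
    have h2 : ContinuousOn (fun s : ℝ => fderivWithin ℝ G S (s, x)) (Set.Icc 0 1) :=
      h1.comp ((continuous_id.prodMk continuous_const).continuousOn)
        (fun s (hs : s ∈ Set.Icc (0:ℝ) 1) => show ((s, x) : ℝ × E) ∈ S from ⟨hs, hx⟩)
    have h3 : ContinuousOn
        (fun s : ℝ => (fderivWithin ℝ G S (s, x)).comp (ContinuousLinearMap.inr ℝ ℝ E))
        (Set.Icc 0 1) := h2.clm_comp continuousOn_const
    exact h3.congr (fun s hs => hAeq s hs)
  have hg_cont : ContinuousOn g (Set.Icc (0:ℝ) 1) := by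
    have hω_cont : ContinuousOn (fun s : ℝ => ω (𝔽 s x)) (Set.Icc 0 1) :=
      hω.continuousOn.comp hFx_cont (fun s hs => hmem s hs x hx)
    haveI : ContinuousAdd (E →L[ℝ] E →L[ℝ] ℝ) :=
      (SeminormedAddCommGroup.toIsTopologicalAddGroup (E := E →L[ℝ] E →L[ℝ] ℝ)).toContinuousAdd
    have hW_cont : ContinuousOn
        (fun s : ℝ => (1 - s) • ω₀ + s • ω (𝔽 s x)) (Set.Icc 0 1) :=
      ((continuousOn_const.sub continuousOn_id).smul continuousOn_const).add
        (continuousOn_id.smul hω_cont)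
    exact (hW_cont.clm_apply (hA_cont.clm_apply continuousOn_const)).clm_apply
      (hA_cont.clm_apply continuousOn_const)
  -- derivative of g vanishes on (0,1)
  have hderiv : ∀ t₀ ∈ Set.Ioo (0:ℝ) 1, HasDerivAt g 0 t₀ := by
    intro t₀ ht₀
    have ht₀I : t₀ ∈ Set.Icc (0:ℝ) 1 := Ioo_subset_Icc_self ht₀
    set y : E := 𝔽 t₀ x with hy_def
    have hyU : y ∈ U := hmem t₀ ht₀I x hx
    set O : Set (ℝ × E) := Set.Ioo (0:ℝ) 1 ×ˢ V with hO_def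
    have hO : IsOpen O := isOpen_Ioo.prod hV
    have hp₀ : ((t₀, x) : ℝ × E) ∈ O := ⟨ht₀, hx⟩
    have hGO : ContDiffOn ℝ (⊤ : ℕ∞) G O :=
      h𝔽_smooth.mono (Set.prod_mono Ioo_subset_Icc_self subset_rfl)
    have hD_all : ∀ p ∈ O, HasFDerivAt G (fderiv ℝ G p) p := by
      intro p hp
      exact (((hGO p hp).contDiffAt (hO.mem_nhds hp)).differentiableAt (by simp)).hasFDerivAt
    set D : ℝ × E → (ℝ × E) →L[ℝ] E := fderiv ℝ G with hD_def
    have hD_diff : ContDiffOn ℝ 1 D O := hGO.fderiv_of_isOpen hO htwo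
    have hf'' : HasFDerivAt D (fderiv ℝ D (t₀, x)) (t₀, x) :=
      (((hD_diff (t₀, x) hp₀).contDiffAt (hO.mem_nhds hp₀)).differentiableAt
        one_ne_zero).hasFDerivAt
    set W2 : (ℝ × E) →L[ℝ] (ℝ × E) →L[ℝ] E := fderiv ℝ D (t₀, x) with hW2_def
    have hsymm : ∀ p q : ℝ × E, W2 p q = W2 q p :=
      second_derivative_symmetric_of_eventually
        (eventually_of_mem (hO.mem_nhds hp₀) hD_all) hf''
    -- derivative of 𝔽 s at x for s near t₀, as fderiv of G
    have hAloc : ∀ s ∈ Set.Ioo (0:ℝ) 1,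
        HasFDerivAt (𝔽 s) ((D (s, x)).comp (ContinuousLinearMap.inr ℝ ℝ E)) x := by
      intro s hs
      exact (hD_all (s, x) ⟨hs, hx⟩).comp x (hasFDerivAt_prodMk_right s x)
    set A : ℝ → E →L[ℝ] E := fun s => fderiv ℝ (𝔽 s) x with hA_def
    have hAloc' : ∀ s ∈ Set.Ioo (0:ℝ) 1,
        A s = (D (s, x)).comp (ContinuousLinearMap.inr ℝ ℝ E) :=
      fun s hs => (hAloc s hs).fderiv
    have hFt₀ : HasFDerivAt (𝔽 t₀) (A t₀) x :=
      (hAloc t₀ ht₀).differentiableAt.hasFDerivAt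
    set a : E := A t₀ u with ha_def
    set b : E := A t₀ v with hb_def
    -- derivative of A at t₀
    have hDcurve : HasDerivAt (fun s : ℝ => D (s, x)) (W2 (1, 0)) t₀ := by
      have hc : HasDerivAt (fun s : ℝ => ((s, x) : ℝ × E)) ((1 : ℝ), (0 : E)) t₀ :=
        (hasDerivAt_id t₀).prodMk (hasDerivAt_const t₀ x)
      exact hf''.comp_hasDerivAt t₀ hc
    have hA' : HasDerivAt A
        ((W2 (1, 0)).comp (ContinuousLinearMap.inr ℝ ℝ E)) t₀ := by
      have e : ((ℝ × E) →L[ℝ] E) →L[ℝ] (E →L[ℝ] E) :=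
        (ContinuousLinearMap.compL ℝ E (ℝ × E) E).flip (ContinuousLinearMap.inr ℝ ℝ E)
      have h2 : HasDerivAt (fun s : ℝ => (D (s, x)).comp (ContinuousLinearMap.inr ℝ ℝ E))
          ((W2 (1, 0)).comp (ContinuousLinearMap.inr ℝ ℝ E)) t₀ :=
        ((ContinuousLinearMap.compL ℝ E (ℝ × E) E).flip
          (ContinuousLinearMap.inr ℝ ℝ E)).hasFDerivAt.comp_hasDerivAt t₀ hDcurve
      exact h2.congr_of_eventuallyEq
        (eventually_of_mem (isOpen_Ioo.mem_nhds ht₀) (fun s hs => hAloc' s hs))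
    -- vector field space derivative
    set XJ : ℝ × E → E := fun p => X p.1 p.2 with hXJ_def
    have hO' : IsOpen (Set.Ioo (0:ℝ) 1 ×ˢ U) := isOpen_Ioo.prod hU
    have hXJ_smooth : ContDiffOn ℝ (⊤ : ℕ∞) XJ (Set.Ioo (0:ℝ) 1 ×ˢ U) :=
      hX_smooth.mono (Set.prod_mono Ioo_subset_Icc_self subset_rfl)
    have hXJd : HasFDerivAt XJ (fderiv ℝ XJ (t₀, y)) (t₀, y) :=
      (((hXJ_smooth (t₀, y) ⟨ht₀, hyU⟩).contDiffAt
        (hO'.mem_nhds ⟨ht₀, hyU⟩)).differentiableAt (by simp)).hasFDerivAt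
    set L : E →L[ℝ] E := (fderiv ℝ XJ (t₀, y)).comp (ContinuousLinearMap.inr ℝ ℝ E)
      with hL_def
    have hL : HasFDerivAt (X t₀) L y :=
      hXJd.comp y (hasFDerivAt_prodMk_right t₀ y)
    -- Clairaut: mixed partials agree
    have hmix : ∀ w : E, W2 (0, w) (1, 0) = L (A t₀ w) := by
      have ev : ((ℝ × E) →L[ℝ] E) →L[ℝ] E :=
        ContinuousLinearMap.apply ℝ E ((1 : ℝ), (0 : E))
      have hin : HasFDerivAt (fun x' : E => D (t₀, x'))
          (W2.comp (ContinuousLinearMap.inr ℝ ℝ E)) x :=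
        hf''.comp x (hasFDerivAt_prodMk_right t₀ x)
      have hφ : HasFDerivAt (fun x' : E => D (t₀, x') ((1 : ℝ), (0 : E)))
          ((ContinuousLinearMap.apply ℝ E ((1 : ℝ), (0 : E))).comp
            (W2.comp (ContinuousLinearMap.inr ℝ ℝ E))) x :=
        (ContinuousLinearMap.apply ℝ E ((1 : ℝ), (0 : E))).hasFDerivAt.comp x hin
      have hψ : HasFDerivAt (fun x' : E => X t₀ (𝔽 t₀ x')) (L.comp (A t₀)) x :=
        hL.comp x hFt₀
      have heq : (fun x' : E => X t₀ (𝔽 t₀ x'))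
          =ᶠ[nhds x] (fun x' : E => D (t₀, x') ((1 : ℝ), (0 : E))) := by
        refine eventually_of_mem (hV.mem_nhds hx) (fun x' hx' => ?_)
        have h1 : HasDerivAt (fun s : ℝ => G (s, x')) (D (t₀, x') ((1:ℝ), (0:E))) t₀ :=
          by have := (hD_all (t₀, x') ⟨ht₀, hx'⟩).comp_hasDerivAt t₀
                ((hasDerivAt_id t₀).prodMk (hasDerivAt_const t₀ x')); exact this
        have h2 : HasDerivAt (fun s : ℝ => 𝔽 s x') (X t₀ (𝔽 t₀ x')) t₀ :=
          h𝔽t x' hx' t₀ ht₀I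
        exact (h2.unique h1)
      have hψ2 : HasFDerivAt (fun x' : E => X t₀ (𝔽 t₀ x'))
          ((ContinuousLinearMap.apply ℝ E ((1 : ℝ), (0 : E))).comp
            (W2.comp (ContinuousLinearMap.inr ℝ ℝ E))) x :=
        hφ.congr_of_eventuallyEq heq
      have hfin := hψ2.unique hψ
      intro w
      have := congrArg (fun T : E →L[ℝ] E => T w) hfin
      simpa using this
    have hmix' : ∀ w : E, W2 ((1 : ℝ), (0 : E)) (0, w) = L (A t₀ w) :=
      fun w => (hsymm _ _).trans (hmix w)
    -- derivative of ω along the flow line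
    have hωy : HasFDerivAt ω (fderiv ℝ ω y) y :=
      (((hω y hyU).contDiffAt (hU.mem_nhds hyU)).differentiableAt (by simp)).hasFDerivAt
    set Dω : E →L[ℝ] E →L[ℝ] E →L[ℝ] ℝ := fderiv ℝ ω y with hDω_def
    have hF' : HasDerivAt (fun s : ℝ => 𝔽 s x) (X t₀ y) t₀ := h𝔽t x hx t₀ ht₀I
    set Z : E := X t₀ y with hZ_def
    have hωF : HasDerivAt (fun s : ℝ => ω (𝔽 s x)) (Dω Z) t₀ :=
      by have := hωy.comp_hasDerivAt_of_eq (E := E →L[ℝ] E →L[ℝ] ℝ) t₀ hF' hy_def; exact this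
    -- derivative of the time-dependent form
    haveI : IsBoundedSMul ℝ (E →L[ℝ] E →L[ℝ] ℝ) := @NormedSpace.toIsBoundedSMul ℝ (E →L[ℝ] E →L[ℝ] ℝ) _ _ _
    have hW : HasDerivAt (fun s : ℝ => (1 - s) • ω₀ + s • ω (𝔽 s x))
        ((0 - 1 : ℝ) • ω₀ + (t₀ • Dω Z + (1 : ℝ) • ω y)) t₀ := by
      have h1 : HasDerivAt (fun s : ℝ => (1 - s : ℝ)) (0 - 1 : ℝ) t₀ :=
        (hasDerivAt_const t₀ (1:ℝ)).sub (hasDerivAt_id t₀)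
      exact (h1.smul_const (F := E →L[ℝ] E →L[ℝ] ℝ) ω₀).add ((hasDerivAt_id t₀).smul (F := E →L[ℝ] E →L[ℝ] ℝ) hωF)
    -- assemble derivative of g
    have hAu : HasDerivAt (fun s : ℝ => A s u)
        ((W2 (1, 0)).comp (ContinuousLinearMap.inr ℝ ℝ E) u + A t₀ 0) t₀ :=
      hA'.clm_apply (hasDerivAt_const t₀ u)
    have hAv : HasDerivAt (fun s : ℝ => A s v)
        ((W2 (1, 0)).comp (ContinuousLinearMap.inr ℝ ℝ E) v + A t₀ 0) t₀ :=
      hA'.clm_apply (hasDerivAt_const t₀ v)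
    have h3 := (hW.clm_apply hAu).clm_apply hAv
    -- now show the big derivative is 0
    set Ω : E →L[ℝ] E →L[ℝ] ℝ := (1 - t₀) • ω₀ + t₀ • ω y with hΩ_def
    have hA'u : (W2 (1, 0)).comp (ContinuousLinearMap.inr ℝ ℝ E) u + A t₀ 0 = L a := by
      simp only [map_zero, add_zero, ContinuousLinearMap.comp_apply,
        ContinuousLinearMap.inr_apply]
      exact hmix' u
    have hA'v : (W2 (1, 0)).comp (ContinuousLinearMap.inr ℝ ℝ E) v + A t₀ 0 = L b := by
      simp only [map_zero, add_zero, ContinuousLinearMap.comp_apply,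
        ContinuousLinearMap.inr_apply]
      exact hmix' v
    -- algebraic facts
    have hΩalt : ∀ r : E, Ω r r = 0 := by
      intro r
      simp [hΩ_def, hω₀_alt r, hω_alt y r]
    have e3 : ∀ p q : E, Ω p q = -Ω q p := alt_antisym Ω hΩalt
    -- derivative of the pointwise 2-form family
    have hB : HasFDerivAt (fun x' : E => (1 - t₀) • ω₀ + t₀ • ω x') (t₀ • Dω) y := by
      have := (HasFDerivAt.const_smul (𝕜 := ℝ) (E := E) (F := E →L[ℝ] E →L[ℝ] ℝ) (R := ℝ) (f := ω) hωy t₀).const_add ((1 - t₀) • ω₀)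
      exact this
    -- F2: differentiate the defining equation of X
    have e2 : ∀ w c : E, Ω (L w) c + t₀ * (Dω w Z c) = -(fderiv ℝ α y w c) := by
      have hαy : HasFDerivAt α (fderiv ℝ α y) y :=
        (((hα y hyU).contDiffAt (hU.mem_nhds hyU)).differentiableAt (by simp)).hasFDerivAt
      have hf₁ : HasFDerivAt (fun x' : E => ((1 - t₀) • ω₀ + t₀ • ω x') (X t₀ x'))
          (Ω.comp L + (t₀ • Dω).flip Z) y := by
        have := hB.clm_apply hL
        simpa [hΩ_def, hZ_def] using this
      have heq2 : (fun x' : E => ((1 - t₀) • ω₀ + t₀ • ω x') (X t₀ x'))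
          =ᶠ[nhds y] (fun x' : E => -(α x')) := by
        refine eventually_of_mem (hU.mem_nhds hyU) (fun x' hx' => ?_)
        exact ContinuousLinearMap.ext fun w => hX t₀ ht₀I x' hx' w
      have hf₂ : HasFDerivAt (fun x' : E => -(α x')) (Ω.comp L + (t₀ • Dω).flip Z) y :=
        hf₁.congr_of_eventuallyEq heq2.symm
      have hfin := hf₂.unique hαy.neg
      intro w c
      have := congrArg (fun T : E →L[ℝ] E →L[ℝ] ℝ => T w c) hfin
      simpa [ContinuousLinearMap.add_apply, ContinuousLinearMap.comp_apply,
        ContinuousLinearMap.flip_apply, ContinuousLinearMap.smul_apply,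
        smul_eq_mul] using this
    -- F4: Dω w is alternating
    have e4diag : ∀ w r : E, Dω w r r = 0 := by
      intro w r
      have hM : HasFDerivAt (fun x' : E => ω x' r r)
          (((ContinuousLinearMap.apply ℝ ℝ r).comp
            (ContinuousLinearMap.apply ℝ (E →L[ℝ] ℝ) r)).comp Dω) y := by
        exact ((ContinuousLinearMap.apply ℝ ℝ r).comp
          (ContinuousLinearMap.apply ℝ (E →L[ℝ] ℝ) r)).hasFDerivAt.comp (𝕜 := ℝ) (E := E) (F := E →L[ℝ] E →L[ℝ] ℝ) (f := ω) y hωy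
      have hzero : (fun x' : E => ω x' r r) = fun _ => (0:ℝ) :=
        funext fun x' => hω_alt x' r
      rw [hzero] at hM
      have := hM.unique (hasFDerivAt_const 0 y)
      have h2 := congrArg (fun T : E →L[ℝ] ℝ => T w) this
      simpa using h2
    have e4 : ∀ w p q : E, Dω w p q = -Dω w q p :=
      fun w => alt_antisym (Dω w) (e4diag w)
    -- F5: closedness
    have e5 : ∀ p q r : E,
        t₀ * Dω p q r + t₀ * Dω q r p + t₀ * Dω r p q = 0 := by
      intro p q r
      have hfd : fderiv ℝ (fun y' : E => (1 - t₀) • ω₀ + t₀ • ω y') y = t₀ • Dω :=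
        hB.fderiv
      have := hclosed t₀ ht₀I y hyU p q r
      rw [hfd] at this
      simpa [ContinuousLinearMap.smul_apply, smul_eq_mul] using this
    -- the big derivative equals zero
    have hzero : (((0 - 1 : ℝ) • ω₀ + (t₀ • Dω Z + (1 : ℝ) • ω y)) (A t₀ u)
          + ((1 - t₀) • ω₀ + t₀ • ω (𝔽 t₀ x))
            ((W2 (1, 0)).comp (ContinuousLinearMap.inr ℝ ℝ E) u + A t₀ 0)) (A t₀ v)
        + (((1 - t₀) • ω₀ + t₀ • ω (𝔽 t₀ x)) (A t₀ u))
            ((W2 (1, 0)).comp (ContinuousLinearMap.inr ℝ ℝ E) v + A t₀ 0) = 0 := by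
      rw [hA'u, hA'v]
      have hΩωy : ((1 - t₀) • ω₀ + t₀ • ω (𝔽 t₀ x)) = Ω := by rw [hΩ_def, hy_def]
      rw [hΩωy]
      have e1 := hdα y hyU a b
      have e2a := e2 a b
      have h2b := e2 b a
      have e3' : Ω a (L b) = -(Ω (L b) a) := e3 a (L b)
      have e5' := e5 Z a b
      have e4' : t₀ * Dω a b Z = -(t₀ * Dω a Z b) := by rw [e4 a b Z]; ring
      have e5'' : t₀ * Dω Z a b - t₀ * Dω a Z b + t₀ * Dω b Z a = 0 := by
        have h := e5 Z a b
        have h4 : t₀ * Dω a b Z = -(t₀ * Dω a Z b) := e4'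
        linarith
      simp only [ContinuousLinearMap.add_apply, ContinuousLinearMap.smul_apply,
        smul_eq_mul]
      -- goal is now a real arithmetic identity
      have hΩLa : Ω (L a) b = -(fderiv ℝ α y a b) - t₀ * Dω a Z b := by linarith [e2 a b]
      have hΩaLb : Ω a (L b) = fderiv ℝ α y b a + t₀ * Dω b Z a := by
        have := e2 b a
        have h3 := e3 a (L b)
        -- Ω a (L b) = -(Ω (L b) a), Ω (L b) a = -(fderiv α y b a) - t₀ Dω b Z a
        linarith
      simp only [hΩ_def, ContinuousLinearMap.add_apply,
        ContinuousLinearMap.smul_apply, smul_eq_mul] at hΩLa hΩaLb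
      linarith [e1, e5'', hΩLa, hΩaLb]
    rw [hzero] at h3
    exact h3
  -- g is constant on [0,1]
  have hIcc : Convex ℝ (Set.Icc (0:ℝ) 1) := convex_Icc 0 1
  have hdiff : DifferentiableOn ℝ g (interior (Set.Icc (0:ℝ) 1)) := by
    rw [interior_Icc]
    exact fun s hs => (hderiv s hs).differentiableAt.differentiableWithinAt
  have hderiv0 : ∀ s ∈ interior (Set.Icc (0:ℝ) 1), deriv g s = 0 := by
    intro s hs
    have hs' : s ∈ Set.Ioo (0:ℝ) 1 := by rwa [interior_Icc] at hs
    exact (hderiv s hs').deriv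
  have hmono : MonotoneOn g (Set.Icc (0:ℝ) 1) :=
    monotoneOn_of_deriv_nonneg hIcc hg_cont hdiff
      (fun s hs => le_of_eq (hderiv0 s hs).symm)
  have hanti : AntitoneOn g (Set.Icc (0:ℝ) 1) :=
    antitoneOn_of_deriv_nonpos hIcc hg_cont hdiff
      (fun s hs => le_of_eq (hderiv0 s hs))
  have h0I : (0:ℝ) ∈ Set.Icc (0:ℝ) 1 := ⟨le_rfl, zero_le_one⟩
  have hgt : g t = g 0 :=
    le_antisymm (hanti h0I ht ht.1) (hmono h0I ht ht.1)
  have hg0 : g 0 = ω₀ u v := by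
    have hid : fderiv ℝ (𝔽 0) x = ContinuousLinearMap.id ℝ E := by
      have heq : 𝔽 0 =ᶠ[nhds x] id :=
        eventually_of_mem (hV.mem_nhds hx) (fun x' hx' => h𝔽0 x' hx')
      rw [heq.fderiv_eq, fderiv_id]
    simp [hg_def, hid]
  calc ((1 - t) • ω₀ + t • ω (𝔽 t x)) (fderiv ℝ (𝔽 t) x u) (fderiv ℝ (𝔽 t) x v)
      = g t := rfl
    _ = g 0 := hgt
    _ = ω₀ u v := hg0
end
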